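/- arXiv:2112.14737 — 12 statements merged into one kernel-verified Lean document; each statement's English description precedes it below -/
import Mathlib

section
/- Let F be a finite field with exactly q elements, let P, Q ∈ F[X] be nonzero coprime polynomials with natDegree P = m and natDegree Q = m, and let D be a natural number with m ≤ D. Then for every polynomial T ∈ F[X] with natDegree T ≤ D + m, the number of pairs (R₁, R₂) of polynomials with natDegree R₁ ≤ D, natDegree R₂ ≤ D and R₁·P + R₂·Q = T is exactly q^(D − m + 1). Equivalently, when R₁ and R₂ are chosen independently and uniformly at random among polynomials of degree at most D, the polynomial R₁·P + R₂·Q is uniformly distributed over the polynomials of degree at most D + m. -/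
open Polynomial

private lemma card_natDegree_le (F : Type*) [Field F] [Fintype F] (n : ℕ) :
    Nat.card {S : F[X] // S.natDegree ≤ n} = Fintype.card F ^ (n + 1) := by
  have hiff : ∀ p : F[X], p.natDegree ≤ n ↔ p ∈ degreeLT F (n + 1) := by
    intro p
    rw [mem_degreeLT, Nat.cast_add, Nat.cast_one, natDegree_le_iff_degree_le]
    constructor
    · intro h; exact lt_of_le_of_lt h (by exact_mod_cast WithBot.coe_lt_coe.mpr (Nat.lt_succ_self n))
    · intro h
      rcases le_or_gt p.degree n with h' | h'
      · exact h'
      · exact absurd h (not_lt.mpr (Nat.WithBot.add_one_le_of_lt h'))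
  calc Nat.card {S : F[X] // S.natDegree ≤ n}
      = Nat.card (degreeLT F (n + 1)) := Nat.card_congr (Equiv.subtypeEquivRight hiff)
    _ = Nat.card (Fin (n + 1) → F) := Nat.card_congr (degreeLTEquiv F (n + 1)).toEquiv
    _ = Fintype.card F ^ (n + 1) := by
        simp [Nat.card_eq_fintype_card, Fintype.card_fun]

/-- Kissner–Song uniformity lemma (counting form): for coprime `P, Q` of equal
degree `m` and any target `T` of degree at most `D + m`, there are exactly
`q ^ (D - m + 1)` pairs `(R₁, R₂)` of polynomials of degree at most `D` with
`R₁ * P + R₂ * Q = T`. -/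
theorem stmt_0 {F : Type*} [Field F] [Fintype F] (q : ℕ) (hq : Fintype.card F = q)
    (P Q : F[X]) (hP : P ≠ 0) (hQ : Q ≠ 0) (hcop : IsCoprime P Q)
    (m D : ℕ) (hPm : P.natDegree = m) (hQm : Q.natDegree = m) (hmD : m ≤ D) :
    ∀ T : F[X], T.natDegree ≤ D + m →
      Nat.card {R : F[X] × F[X] //
        R.1.natDegree ≤ D ∧ R.2.natDegree ≤ D ∧ R.1 * P + R.2 * Q = T}
        = q ^ (D - m + 1) := by
  intro T hT
  classical
  have hcop' := hcop
  obtain ⟨A, B, hAB⟩ := hcop'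
  have hc : Q.leadingCoeff ≠ 0 := leadingCoeff_ne_zero.mpr hQ
  set Q' : F[X] := Q * C Q.leadingCoeff⁻¹ with hQ'def
  have hQ'monic : Q'.Monic := monic_mul_leadingCoeff_inv hQ
  set S0 : F[X] := (T * A) /ₘ Q' with hS0
  set A0 : F[X] := (T * A) %ₘ Q' with hA0
  set B0 : F[X] := T * B + C Q.leadingCoeff⁻¹ * S0 * P with hB0
  have hdiv : A0 + Q' * S0 = T * A := modByMonic_add_div (T * A) Q'
  have hsol : A0 * P + B0 * Q = T := by
    rw [hB0]
    linear_combination P * hdiv + T * hAB - S0 * P * hQ'def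
  have hA0m : A0.natDegree ≤ m := by
    have h := degree_modByMonic_lt (T * A) hQ'monic
    rw [← hA0, hQ'def, degree_mul, degree_C (inv_ne_zero hc), add_zero,
      degree_eq_natDegree hQ, hQm] at h
    exact natDegree_le_iff_degree_le.mpr h.le
  have hA0D : A0.natDegree ≤ D := le_trans hA0m hmD
  have hB0D : B0.natDegree ≤ D := by
    have hBQ : B0 * Q = T - A0 * P := by linear_combination hsol
    by_cases h0 : B0 = 0
    · simp [h0]
    · have h1 : (B0 * Q).natDegree ≤ D + m := by
        rw [hBQ]
        refine le_trans (natDegree_sub_le _ _) (max_le hT ?_)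
        exact le_trans natDegree_mul_le (by rw [hPm]; omega)
      rw [natDegree_mul h0 hQ, hQm] at h1
      omega
  have hkey : Nat.card {R : F[X] × F[X] //
        R.1.natDegree ≤ D ∧ R.2.natDegree ≤ D ∧ R.1 * P + R.2 * Q = T}
      = Nat.card {S : F[X] // S.natDegree ≤ D - m} := by
    have hf : ∀ S : F[X], S.natDegree ≤ D - m →
        (A0 + S * Q).natDegree ≤ D ∧ (B0 - S * P).natDegree ≤ D ∧
          (A0 + S * Q) * P + (B0 - S * P) * Q = T := by
      intro S hS
      refine ⟨?_, ?_, by linear_combination hsol⟩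
      · refine le_trans (natDegree_add_le _ _) (max_le hA0D ?_)
        exact le_trans natDegree_mul_le (by rw [hQm]; omega)
      · refine le_trans (natDegree_sub_le _ _) (max_le hB0D ?_)
        exact le_trans natDegree_mul_le (by rw [hPm]; omega)
    refine Nat.card_congr (Equiv.symm (Equiv.ofBijective
      (fun S : {S : F[X] // S.natDegree ≤ D - m} =>
        (⟨(A0 + S.1 * Q, B0 - S.1 * P), hf S.1 S.2⟩ :
          {R : F[X] × F[X] //
            R.1.natDegree ≤ D ∧ R.2.natDegree ≤ D ∧ R.1 * P + R.2 * Q = T}))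
      ⟨?_, ?_⟩))
    · rintro ⟨S1, h1⟩ ⟨S2, h2⟩ h
      simp only [Subtype.mk.injEq, Prod.mk.injEq] at h ⊢
      have heq : S1 * Q = S2 * Q := by linear_combination h.1
      exact mul_right_cancel₀ hQ heq
    · rintro ⟨⟨R1, R2⟩, hR1, hR2, hReq⟩
      have hdvd : Q ∣ (R1 - A0) := by
        apply hcop.symm.dvd_of_dvd_mul_right
        exact ⟨B0 - R2, by linear_combination hReq - hsol⟩
      obtain ⟨S, hS⟩ := hdvd
      have hSdeg : S.natDegree ≤ D - m := by
        by_cases h0 : S = 0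
        · simp [h0]
        · have hle : (Q * S).natDegree ≤ D := by
            rw [← hS]
            exact le_trans (natDegree_sub_le _ _) (max_le hR1 hA0D)
          rw [natDegree_mul hQ h0, hQm] at hle
          omega
      refine ⟨⟨S, hSdeg⟩, ?_⟩
      apply Subtype.ext
      simp only [Prod.mk.injEq]
      constructor
      · linear_combination -hS
      · have heq : (B0 - S * P) * Q = R2 * Q := by
          linear_combination hsol - hReq + P * hS
        exact mul_right_cancel₀ hQ heq
  rw [hkey, card_natDegree_le F (D - m), hq]
end

section
/- Let F be a finite field with exactly q elements, let n be a natural number, let x : Fin n → F be injective (n distinct evaluation points), and let D be a natural number with D + 1 ≤ n. Then the number of tuples y : Fin n → F for which there exists a polynomial Q ∈ F[X] with natDegree Q ≤ D satisfying Q.eval (x i) = y i for every i equals q^(D + 1). Consequently, if y is chosen uniformly at random from F^n, the probability that some polynomial of degree at most D interpolates all n points (x i, y i) is exactly 1/q^(n − D − 1). -/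
open Polynomial

/-- Lemma `polyOnSupSet`: given `n` distinct evaluation points and `D + 1 ≤ n`,
the number of value tuples `y : Fin n → F` interpolated by some polynomial of
degree at most `D` is exactly `q ^ (D + 1)`. -/
theorem stmt_1 {F : Type*} [Field F] [Fintype F] (q : ℕ) (hq : Fintype.card F = q)
    (n : ℕ) (x : Fin n → F) (hx : Function.Injective x)
    (D : ℕ) (hD : D + 1 ≤ n) :
    Nat.card {y : Fin n → F //
      ∃ Q : F[X], Q.natDegree ≤ D ∧ ∀ i, Q.eval (x i) = y i} = q ^ (D + 1) := by
  classical
  have hmem : ∀ Q : F[X], Q ∈ Polynomial.degreeLT F (D + 1) ↔ Q.natDegree ≤ D := by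
    intro Q
    rw [Polynomial.mem_degreeLT]
    constructor
    · intro h
      by_cases hQ : Q = 0
      · simp [hQ]
      · exact Nat.lt_succ_iff.mp (by exact_mod_cast
          (Polynomial.degree_eq_natDegree hQ ▸ h :
            ((Q.natDegree : WithBot ℕ) < (D + 1 : ℕ))))
    · intro h
      calc Q.degree ≤ (D : WithBot ℕ) := Polynomial.degree_le_of_natDegree_le h
        _ < ((D : ℕ) + 1 : ℕ) := by exact_mod_cast Nat.lt_succ_self D
  have hbij : Function.Bijective (fun Q : Polynomial.degreeLT F (D + 1) =>
      (⟨fun i => Q.1.eval (x i), Q.1, (hmem Q.1).mp Q.2, fun i => rfl⟩ :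
        {y : Fin n → F // ∃ Q : F[X], Q.natDegree ≤ D ∧ ∀ i, Q.eval (x i) = y i})) := by
    constructor
    · rintro ⟨Q1, h1⟩ ⟨Q2, h2⟩ h
      have heq : ∀ i, (Q1 - Q2).eval (x i) = 0 := by
        intro i
        have := congrArg (fun y => y.1 i) h
        simp only at this
        simp [this]
      have hdeg : (Q1 - Q2).natDegree < Fintype.card (Fin n) := by
        rw [Fintype.card_fin]
        have : (Q1 - Q2).natDegree ≤ D :=
          le_trans (Polynomial.natDegree_sub_le _ _)
            (max_le ((hmem Q1).mp h1) ((hmem Q2).mp h2))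
        omega
      have := Polynomial.eq_zero_of_natDegree_lt_card_of_eval_eq_zero _ hx heq hdeg
      exact Subtype.ext (sub_eq_zero.mp this)
    · rintro ⟨y, Q, hQ, hy⟩
      exact ⟨⟨Q, (hmem Q).mpr hQ⟩, Subtype.ext (funext fun i => hy i)⟩
  have e := (Equiv.ofBijective _ hbij).symm.trans
    (Polynomial.degreeLTEquiv F (D + 1)).toEquiv
  rw [Nat.card_congr e, Nat.card_eq_fintype_card, Fintype.card_fun, Fintype.card_fin, hq]
end

section
/- Let F be a finite field with exactly q elements. Let P, Q ∈ F[X] be nonzero polynomials with natDegree P = ℓ and natDegree Q = ℓ, and let g be the natDegree of gcd(P, Q). Let x : Fin n → F be injective, assume P.eval (x k) ≠ 0 for every k, and assume n ≤ 2ℓ − g + 1. Then for every tuple v : Fin n → F, the number of pairs (R₁, R₂) of polynomials with natDegree R₁ ≤ ℓ, natDegree R₂ ≤ ℓ and (R₁·P + R₂·Q).eval (x k) = v k for every k equals q^(2ℓ + 2 − n). In particular this count is the same for every v and for every choice of Q satisfying the hypotheses, so the n evaluations of R₁·P + R₂·Q at the points x reveal no information about Q. -/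
open Polynomial

/-- Combinatorial core of Proposition 1 (`indcpaGreaterThanRange`): if
`n ≤ 2ℓ - g + 1`, then for every value tuple `v`, the number of pairs
`(R₁, R₂)` of polynomials of degree at most `ℓ` whose combination
`R₁ * P + R₂ * Q` evaluates to `v` at the `n` distinct points is exactly
`q ^ (2ℓ + 2 - n)`, independent of `v` and of `Q`. -/
theorem stmt_2 {F : Type*} [Field F] [Fintype F] [DecidableEq F] (q : ℕ) (hq : Fintype.card F = q)
    (P Q : F[X]) (hP : P ≠ 0) (hQ : Q ≠ 0)
    (ℓ g n : ℕ) (hPd : P.natDegree = ℓ) (hQd : Q.natDegree = ℓ)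
    (hg : (EuclideanDomain.gcd P Q).natDegree = g)
    (x : Fin n → F) (hx : Function.Injective x)
    (hPx : ∀ k, P.eval (x k) ≠ 0)
    (hn : n ≤ 2 * ℓ - g + 1) :
    ∀ v : Fin n → F,
      Nat.card {R : F[X] × F[X] //
        R.1.natDegree ≤ ℓ ∧ R.2.natDegree ≤ ℓ ∧
        ∀ k, (R.1 * P + R.2 * Q).eval (x k) = v k}
        = q ^ (2 * ℓ + 2 - n) := by
  classical
  intro v
  set D : F[X] := EuclideanDomain.gcd P Q with hDdef
  have hD0 : D ≠ 0 := fun h => hP (EuclideanDomain.gcd_eq_zero_iff.mp h).1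
  have hDP : D ∣ P := EuclideanDomain.gcd_dvd_left P Q
  have hDQ : D ∣ Q := EuclideanDomain.gcd_dvd_right P Q
  have hgl : g ≤ ℓ := by
    rw [← hg, ← hPd]; exact Polynomial.natDegree_le_of_dvd hDP hP
  have hDx : ∀ k, D.eval (x k) ≠ 0 := by
    intro k h
    obtain ⟨c, hc⟩ := hDP
    exact hPx k (by rw [hc, eval_mul, h, zero_mul])
  -- membership lemmas for degreeLT
  have memW : ∀ p : F[X], p.natDegree ≤ ℓ → p ∈ Polynomial.degreeLT F (ℓ + 1) := by
    intro p hp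
    rw [Polynomial.mem_degreeLT]
    calc p.degree ≤ (p.natDegree : WithBot ℕ) := Polynomial.degree_le_natDegree
      _ < ((ℓ + 1 : ℕ) : WithBot ℕ) := by exact_mod_cast Nat.lt_succ_of_le hp
  have degW : ∀ p : F[X], p ∈ Polynomial.degreeLT F (ℓ + 1) → p.natDegree ≤ ℓ := by
    intro p hp
    rw [Polynomial.mem_degreeLT] at hp
    rcases eq_or_ne p 0 with h | h
    · simp [h]
    · have := (Polynomial.natDegree_lt_iff_degree_lt h).mpr hp
      omega
  -- the linear evaluation map
  set W : Submodule F F[X] := Polynomial.degreeLT F (ℓ + 1) with hWdef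
  let φ : (W × W) →ₗ[F] (Fin n → F) :=
    { toFun := fun R k => ((R.1 : F[X]) * P + (R.2 : F[X]) * Q).eval (x k)
      map_add' := by
        intro a b
        funext k
        simp only [Submodule.coe_add, Prod.fst_add, Prod.snd_add, Pi.add_apply]
        rw [← eval_add]
        ring_nf
      map_smul' := by
        intro c a
        funext k
        simp only [Prod.smul_fst, Prod.smul_snd, SetLike.val_smul, RingHom.id_apply,
          Pi.smul_apply, smul_eq_mul, smul_mul_assoc, ← smul_add, Polynomial.eval_smul] }
  have φ_apply : ∀ (w : W × W) k,
      φ w k = ((w.1 : F[X]) * P + (w.2 : F[X]) * Q).eval (x k) := fun _ _ => rfl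
  -- surjectivity
  have hsurj : Function.Surjective φ := by
    intro u
    have hvs : Set.InjOn x ↑(Finset.univ : Finset (Fin n)) := fun a _ b _ h => hx h
    set S : F[X] :=
      Lagrange.interpolate Finset.univ x (fun k => u k / D.eval (x k)) with hSdef
    have hSdeg : S.natDegree ≤ 2 * ℓ - g := by
      rcases eq_or_ne S 0 with h | h
      · simp [h]
      · have hd : S.degree < ((Finset.univ : Finset (Fin n)).card : WithBot ℕ) :=
          Lagrange.degree_interpolate_lt _ hvs
        rw [Finset.card_univ, Fintype.card_fin] at hd
        have := (Polynomial.natDegree_lt_iff_degree_lt h).mpr hd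
        omega
    have hSval : ∀ k, S.eval (x k) = u k / D.eval (x k) := by
      intro k
      exact Lagrange.eval_interpolate_at_node _ hvs (Finset.mem_univ k)
    set A : F[X] := EuclideanDomain.gcdA P Q with hAdef
    set B : F[X] := EuclideanDomain.gcdB P Q with hBdef
    have hbez : P * A + Q * B = D := (EuclideanDomain.gcd_eq_gcd_ab P Q).symm
    set Q' : F[X] := Q / D with hQ'def
    set P' : F[X] := P / D with hP'def
    have hQ'eq : D * Q' = Q := EuclideanDomain.mul_div_cancel' hD0 hDQ
    have hP'eq : D * P' = P := EuclideanDomain.mul_div_cancel' hD0 hDP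
    have hQ'0 : Q' ≠ 0 := by
      intro h; apply hQ; rw [← hQ'eq, h, mul_zero]
    set T : F[X] := (S * A) / Q' with hTdef
    set R₁ : F[X] := (S * A) % Q' with hR₁def
    set R₂ : F[X] := S * B + T * P' with hR₂def
    have h1 : Q' * T + R₁ = S * A := EuclideanDomain.div_add_mod _ _
    have key : R₁ * P + R₂ * Q = S * D := by
      have h5 : P' * Q = Q' * P := by rw [← hQ'eq, ← hP'eq]; ring
      calc R₁ * P + R₂ * Q = (S * A - Q' * T) * P + (S * B + T * P') * Q := by
            rw [← h1]; ring
        _ = S * (P * A + Q * B) + T * (P' * Q - Q' * P) := by ring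
        _ = S * D := by rw [hbez, h5]; ring
    -- degree bounds
    have hR₁deg : R₁.natDegree ≤ ℓ := by
      rw [Polynomial.natDegree_le_iff_degree_le]
      have h1' : R₁.degree < Q'.degree := EuclideanDomain.mod_lt _ hQ'0
      have h2' : Q'.degree ≤ Q.degree := Polynomial.degree_div_le Q D
      have h3' : Q.degree = (ℓ : WithBot ℕ) := by
        rw [Polynomial.degree_eq_natDegree hQ, hQd]
      exact le_of_lt (lt_of_lt_of_le h1' (h2'.trans_eq h3'))
    have hR₂deg : R₂.natDegree ≤ ℓ := by
      rcases eq_or_ne R₂ 0 with h | h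
      · simp [h]
      · have hRQ : R₂ * Q = S * D - R₁ * P := by rw [← key]; ring
        have hdeg : (R₂ * Q).natDegree ≤ 2 * ℓ := by
          rw [hRQ]
          refine le_trans (Polynomial.natDegree_sub_le _ _) ?_
          have hSD : (S * D).natDegree ≤ 2 * ℓ := by
            refine le_trans (Polynomial.natDegree_mul_le) ?_
            rw [hg]; omega
          have hRP : (R₁ * P).natDegree ≤ 2 * ℓ := by
            refine le_trans (Polynomial.natDegree_mul_le) ?_
            rw [hPd]; omega
          exact max_le hSD hRP
        rw [Polynomial.natDegree_mul h hQ, hQd] at hdeg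
        omega
    have hval : ∀ k, (R₁ * P + R₂ * Q).eval (x k) = u k := by
      intro k
      rw [key, eval_mul, hSval k, div_mul_cancel₀ _ (hDx k)]
    refine ⟨(⟨R₁, memW _ hR₁deg⟩, ⟨R₂, memW _ hR₂deg⟩), ?_⟩
    funext k
    exact hval k
  -- finiteness and dimension computations
  have eW : W ≃ₗ[F] (Fin (ℓ + 1) → F) := Polynomial.degreeLTEquiv F (ℓ + 1)
  have : Finite W := Finite.of_equiv _ eW.toEquiv.symm
  have : FiniteDimensional F W := Module.Finite.equiv eW.symm
  have hfrW : Module.finrank F W = ℓ + 1 := by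
    rw [eW.finrank_eq, Module.finrank_pi, Fintype.card_fin]
  have hfrWW : Module.finrank F (W × W) = 2 * ℓ + 2 := by
    rw [Module.finrank_prod, hfrW]; omega
  have hrange : LinearMap.range φ = ⊤ := LinearMap.range_eq_top.2 hsurj
  have hrank : Module.finrank F (LinearMap.range φ) + Module.finrank F (LinearMap.ker φ)
      = 2 * ℓ + 2 := by
    rw [LinearMap.finrank_range_add_finrank_ker, hfrWW]
  have hfr_range : Module.finrank F (LinearMap.range φ) = n := by
    rw [hrange, finrank_top, Module.finrank_pi, Fintype.card_fin]
  have hfrK : Module.finrank F (LinearMap.ker φ) = 2 * ℓ + 2 - n := by omega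
  -- cardinality of the kernel
  letI : Fintype (LinearMap.ker φ) := Fintype.ofFinite _
  have hKcard : Nat.card (LinearMap.ker φ) = q ^ (2 * ℓ + 2 - n) := by
    rw [Nat.card_eq_fintype_card, Module.card_eq_pow_finrank (K := F), hq, hfrK]
  -- the fiber over v is in bijection with the kernel
  obtain ⟨w₀, hw₀⟩ := hsurj v
  have e2 : {w : W × W // φ w = v} ≃ LinearMap.ker φ :=
    { toFun := fun w => ⟨w.1 - w₀, by
        rw [LinearMap.mem_ker, map_sub, w.2, hw₀, sub_self]⟩
      invFun := fun k => ⟨w₀ + k.1, by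
        have hk : φ k.1 = 0 := k.2
        rw [map_add, hk, hw₀, add_zero]⟩
      left_inv := fun w => by
        apply Subtype.ext
        simp
      right_inv := fun k => by
        apply Subtype.ext
        simp }
  have e1 : {R : F[X] × F[X] //
        R.1.natDegree ≤ ℓ ∧ R.2.natDegree ≤ ℓ ∧
        ∀ k, (R.1 * P + R.2 * Q).eval (x k) = v k} ≃ {w : W × W // φ w = v} :=
    { toFun := fun R => ⟨(⟨R.1.1, memW _ R.2.1⟩, ⟨R.1.2, memW _ R.2.2.1⟩),
        funext fun k => R.2.2.2 k⟩
      invFun := fun w => ⟨((w.1.1 : F[X]), (w.1.2 : F[X])),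
        ⟨degW _ w.1.1.2, degW _ w.1.2.2, fun k => by
          have := congrFun w.2 k
          rwa [φ_apply] at this⟩⟩
      left_inv := fun R => rfl
      right_inv := fun w => rfl }
  rw [Nat.card_congr (e1.trans e2), hKcard]
end

section
/- Let ℓ be a natural number, let β be a type, and let M : Fin ℓ → Bool → β be such that the map (m, v) ↦ M m v is injective (each M_m is injective and the ranges of the M_m are pairwise disjoint). For a vector a : Fin ℓ → Bool define the finite set S_a = { M m (a m) : m ∈ Fin ℓ }. Then for all a, b : Fin ℓ → Bool, the cardinality of the set difference S_a \ S_b equals hammingDist a b. -/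
/-- Correctness of the `Map` step of `tHamQueryLite`: using jointly injective
mapping functions `M m : Bool → β`, the cardinality of the set difference
`S_a \ S_b` equals the Hamming distance of `a` and `b`. -/
theorem stmt_6 {β : Type*} [DecidableEq β] (ℓ : ℕ) (M : Fin ℓ → Bool → β)
    (hM : Function.Injective (fun p : Fin ℓ × Bool => M p.1 p.2))
    (a b : Fin ℓ → Bool) :
    ((Finset.univ.image (fun m => M m (a m))) \
        (Finset.univ.image (fun m => M m (b m)))).card
      = hammingDist a b := by
  have key : ((Finset.univ.image (fun m => M m (a m))) \
        (Finset.univ.image (fun m => M m (b m)))) =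
      (Finset.univ.filter (fun m => a m ≠ b m)).image (fun m => M m (a m)) := by
    ext x
    simp only [Finset.mem_sdiff, Finset.mem_image, Finset.mem_filter, Finset.mem_univ,
      true_and, not_exists, ne_eq]
    constructor
    · rintro ⟨⟨m, rfl⟩, h⟩
      refine ⟨m, ?_, rfl⟩
      intro hab
      exact h m (by rw [hab])
    · rintro ⟨m, hm, rfl⟩
      refine ⟨⟨m, rfl⟩, ?_⟩
      intro m' h
      have h2 : ((m', b m') : Fin ℓ × Bool) = (m, a m) :=
        hM (show (fun p : Fin ℓ × Bool => M p.1 p.2) (m', b m')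
          = (fun p : Fin ℓ × Bool => M p.1 p.2) (m, a m) from h)
      obtain ⟨h3, h4⟩ := Prod.mk.injEq .. ▸ h2
      subst h3
      exact hm h4.symm
  rw [key, Finset.card_image_of_injOn]
  · simp [hammingDist]
  · intro m _ m' _ h
    have h2 : ((m, a m) : Fin ℓ × Bool) = (m', a m') :=
      hM (show (fun p : Fin ℓ × Bool => M p.1 p.2) (m, a m)
        = (fun p : Fin ℓ × Bool => M p.1 p.2) (m', a m') from h)
    exact (Prod.mk.injEq .. ▸ h2).1
end

section
/- For all natural numbers n and k with n > k ≥ 1, twice the number of surjective functions from Fin n onto Fin k is at most k! · C(n, k) · k^(n − k); equivalently, the Stirling number of the second kind satisfies S(n, k) ≤ (1/2)·C(n, k)·k^(n − k) for n > k ≥ 1. -/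
open Function

private lemma sur_card_self (k : ℕ) :
    Nat.card {f : Fin k → Fin k // Surjective f} = k.factorial := by
  have e : {f : Fin k → Fin k // Surjective f} ≃ (Fin k ≃ Fin k) :=
    { toFun := fun f => Equiv.ofBijective f.1 f.2.bijective_of_finite
      invFun := fun e => ⟨e, e.surjective⟩
      left_inv := fun f => rfl
      right_inv := fun e => Equiv.ext fun x => rfl }
  rw [Nat.card_congr e, Nat.card_eq_fintype_card, Fintype.card_equiv (Equiv.refl _),
    Fintype.card_fin]

private lemma sur_card_one (n : ℕ) (hn : 1 ≤ n) :
    Nat.card {f : Fin n → Fin 1 // Surjective f} = 1 := by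
  have : Nonempty {f : Fin n → Fin 1 // Surjective f} :=
    ⟨⟨fun _ => 0, fun y => ⟨⟨0, hn⟩, Subsingleton.elim _ _⟩⟩⟩
  have : Subsingleton {f : Fin n → Fin 1 // Surjective f} :=
    ⟨fun f g => Subtype.ext (funext fun i => Subsingleton.elim _ _)⟩
  exact Nat.card_unique

private lemma ne_last_val {n k : ℕ} (f : Fin (n+1) → Fin (k+1)) (hf : Surjective f)
    (hs : ¬ Surjective fun i : Fin n => f i.castSucc) (i : Fin n) :
    f i.castSucc ≠ f (Fin.last n) := by
  intro h
  apply hs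
  intro w
  obtain ⟨j, hj⟩ := hf w
  rcases Fin.eq_castSucc_or_eq_last j with ⟨j', rfl⟩ | rfl
  · exact ⟨j', hj⟩
  · exact ⟨i, h.trans hj⟩

private lemma isSome_aux {n k : ℕ} (f : Fin (n+1) → Fin (k+1)) (hf : Surjective f)
    (hs : ¬ Surjective fun i : Fin n => f i.castSucc) (i : Fin n) :
    ((finSuccEquiv' (f (Fin.last n))) (f i.castSucc)).isSome := by
  rw [Option.isSome_iff_ne_none]
  intro h
  refine ne_last_val f hf hs i ?_
  have h2 : (finSuccEquiv' (f (Fin.last n))) (f (Fin.last n)) = none := finSuccEquiv'_at _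
  exact (finSuccEquiv' (f (Fin.last n))).injective (h.trans h2.symm)

private noncomputable def phi (n k : ℕ) (f : {f : Fin (n+1) → Fin (k+1) // Surjective f}) :
    Fin (k+1) × ({g : Fin n → Fin k // Surjective g} ⊕ {g : Fin n → Fin (k+1) // Surjective g}) :=
  (f.1 (Fin.last n),
    if hs : Surjective fun i : Fin n => f.1 i.castSucc then .inr ⟨_, hs⟩
    else .inl ⟨fun i => ((finSuccEquiv' (f.1 (Fin.last n))) (f.1 i.castSucc)).get
        (isSome_aux f.1 f.2 hs i), by
      intro j
      set v := f.1 (Fin.last n) with hv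
      obtain ⟨jj, hjj⟩ := f.2 ((finSuccEquiv' v).symm (some j))
      have hne : (finSuccEquiv' v).symm (some j) ≠ v := by
        intro h
        rw [← finSuccEquiv'_symm_none v] at h
        exact Option.some_ne_none j ((finSuccEquiv' v).symm.injective h)
      rcases Fin.eq_castSucc_or_eq_last jj with ⟨i', rfl⟩ | rfl
      · refine ⟨i', ?_⟩
        apply Option.some_injective
        rw [Option.some_get]
        rw [hjj, (finSuccEquiv' v).apply_symm_apply]
      · exact absurd hjj.symm hne⟩)

private lemma phi_injective (n k : ℕ) : Injective (phi n k) := by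
  intro f f' h
  have hv := congrArg Prod.fst h
  have h2 := congrArg Prod.snd h
  simp only [phi] at hv h2
  apply Subtype.ext
  funext j
  rcases Fin.eq_castSucc_or_eq_last j with ⟨i, rfl⟩ | rfl
  swap
  · exact hv
  by_cases hs : Surjective fun i : Fin n => f.1 i.castSucc
  · by_cases hs' : Surjective fun i : Fin n => f'.1 i.castSucc
    · rw [dif_pos hs, dif_pos hs'] at h2
      exact congrFun (congrArg Subtype.val (Sum.inr.inj h2)) i
    · rw [dif_pos hs, dif_neg hs'] at h2
      exact absurd h2 (by simp)
  · by_cases hs' : Surjective fun i : Fin n => f'.1 i.castSucc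
    · rw [dif_neg hs, dif_pos hs'] at h2
      exact absurd h2 (by simp)
    · rw [dif_neg hs, dif_neg hs'] at h2
      have hg := congrFun (congrArg Subtype.val (Sum.inl.inj h2)) i
      have e1 : (finSuccEquiv' (f.1 (Fin.last n))) (f.1 i.castSucc) =
        some (((finSuccEquiv' (f.1 (Fin.last n))) (f.1 i.castSucc)).get
          (isSome_aux f.1 f.2 hs i)) := (Option.some_get _).symm
      have e2 : (finSuccEquiv' (f'.1 (Fin.last n))) (f'.1 i.castSucc) =
        some (((finSuccEquiv' (f'.1 (Fin.last n))) (f'.1 i.castSucc)).get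
          (isSome_aux f'.1 f'.2 hs' i)) := (Option.some_get _).symm
      have key : (finSuccEquiv' (f.1 (Fin.last n))) (f.1 i.castSucc)
          = (finSuccEquiv' (f'.1 (Fin.last n))) (f'.1 i.castSucc) := by
        rw [e1, e2]
        exact congrArg some hg
      rw [hv] at key
      exact (finSuccEquiv' (f'.1 (Fin.last n))).injective key

private lemma sur_rec (n k : ℕ) :
    Nat.card {f : Fin (n+1) → Fin (k+1) // Surjective f} ≤
      (k+1) * (Nat.card {g : Fin n → Fin k // Surjective g}
        + Nat.card {g : Fin n → Fin (k+1) // Surjective g}) := by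
  have := Nat.card_le_card_of_injective (phi n k) (phi_injective n k)
  rwa [Nat.card_prod, Nat.card_sum, Nat.card_eq_fintype_card (α := Fin (k+1)),
    Fintype.card_fin] at this

private lemma main : ∀ n k : ℕ, 1 ≤ k → k < n →
    2 * Nat.card {f : Fin n → Fin k // Surjective f}
      ≤ k.factorial * n.choose k * k ^ (n - k) := by
  intro n
  induction n with
  | zero => intro k hk hn; omega
  | succ m ih =>
    intro k hk hkm
    rcases Nat.lt_or_ge k 2 with hk1 | hk2
    · -- k = 1
      interval_cases k
      rw [sur_card_one (m+1) (by omega)]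
      simp [Nat.choose_one_right]
      omega
    · -- k ≥ 2
      obtain ⟨j, rfl⟩ : ∃ j, k = j + 2 := ⟨k - 2, by omega⟩
      have hrec := sur_rec m (j+1)
      have hm : j + 2 ≤ m := by omega
      rcases eq_or_lt_of_le hm with heq | hlt
      · -- m = k = j+2
        have h1 := ih (j+1) (by omega) (by omega)
        have h2 : Nat.card {f : Fin m → Fin (j+2) // Surjective f} = (j+2).factorial := by
          rw [← heq]; exact sur_card_self (j+2)
        subst heq
        have hc1 : (j+2).choose (j+1) = j + 2 := Nat.choose_succ_self_right (j+1)
        have hc2 : (j+2+1).choose (j+2) = j + 3 := Nat.choose_succ_self_right (j+2)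
        have hsub1 : j + 2 - (j+1) = 1 := by omega
        have hsub2 : j + 2 + 1 - (j+2) = 1 := by omega
        rw [hsub1, hc1, pow_one] at h1
        rw [hsub2, hc2, pow_one]
        have hfact : (j+2).factorial = (j+2) * (j+1).factorial := Nat.factorial_succ _
        nlinarith [hrec, h1, h2, Nat.factorial_pos (j+1)]
      · -- m > k
        have h1 := ih (j+1) (by omega) (by omega)
        have h2 := ih (j+2) (by omega) hlt
        -- bound (j+1)^(m-(j+1)) ≤ (j+2)^(m-(j+1))
        have hpow : (j+1) ^ (m - (j+1)) ≤ (j+2) ^ (m - (j+1)) :=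
          Nat.pow_le_pow_left (by omega) _
        have hchoose : (m+1).choose (j+2) = m.choose (j+1) + m.choose (j+2) :=
          Nat.choose_succ_succ m (j+1)
        have hsub : m - (j+1) = m - (j+2) + 1 := by omega
        have hsub2 : m + 1 - (j+2) = m - (j+2) + 1 := by omega
        have hfact : (j+2).factorial = (j+2) * (j+1).factorial := Nat.factorial_succ _
        calc 2 * Nat.card {f : Fin (m+1) → Fin (j+2) // Surjective f}
            ≤ 2 * ((j+2) * (Nat.card {g : Fin m → Fin (j+1) // Surjective g}
              + Nat.card {g : Fin m → Fin (j+2) // Surjective g})) :=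
              Nat.mul_le_mul_left 2 hrec
          _ = (j+2) * (2 * Nat.card {g : Fin m → Fin (j+1) // Surjective g}
              + 2 * Nat.card {g : Fin m → Fin (j+2) // Surjective g}) := by ring
          _ ≤ (j+2) * ((j+1).factorial * m.choose (j+1) * (j+1) ^ (m - (j+1))
              + (j+2).factorial * m.choose (j+2) * (j+2) ^ (m - (j+2))) := by
                exact Nat.mul_le_mul_left _ (Nat.add_le_add h1 h2)
          _ ≤ (j+2).factorial * (m+1).choose (j+2) * (j+2) ^ (m + 1 - (j+2)) := by
                rw [hchoose, hsub2, hsub]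
                have e1 : (j+2) * ((j+1).factorial * m.choose (j+1) * (j+1) ^ (m - (j+2) + 1))
                    ≤ (j+2).factorial * m.choose (j+1) * (j+2) ^ (m - (j+2) + 1) := by
                  rw [hfact]
                  calc (j+2) * ((j+1).factorial * m.choose (j+1) * (j+1) ^ (m - (j+2) + 1))
                      ≤ (j+2) * ((j+1).factorial * m.choose (j+1) * (j+2) ^ (m - (j+2) + 1)) := by
                        have := Nat.pow_le_pow_left (show j+1 ≤ j+2 by omega) (m - (j+2) + 1)
                        exact Nat.mul_le_mul_left _ (Nat.mul_le_mul_left _ this)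
                    _ = (j+2) * (j+1).factorial * m.choose (j+1) * (j+2) ^ (m - (j+2) + 1) := by
                        ring
                have e2 : (j+2) * ((j+2).factorial * m.choose (j+2) * (j+2) ^ (m - (j+2)))
                    = (j+2).factorial * m.choose (j+2) * (j+2) ^ (m - (j+2) + 1) := by
                  rw [pow_succ]; ring
                calc (j+2) * ((j+1).factorial * m.choose (j+1) * (j+1) ^ (m - (j+2) + 1)
                      + (j+2).factorial * m.choose (j+2) * (j+2) ^ (m - (j+2)))
                    = (j+2) * ((j+1).factorial * m.choose (j+1) * (j+1) ^ (m - (j+2) + 1))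
                      + (j+2) * ((j+2).factorial * m.choose (j+2) * (j+2) ^ (m - (j+2))) := by
                        ring
                  _ ≤ (j+2).factorial * m.choose (j+1) * (j+2) ^ (m - (j+2) + 1)
                      + (j+2).factorial * m.choose (j+2) * (j+2) ^ (m - (j+2) + 1) := by
                        exact Nat.add_le_add e1 (le_of_eq e2)
                  _ = (j+2).factorial * (m.choose (j+1) + m.choose (j+2))
                      * (j+2) ^ (m - (j+2) + 1) := by ring

/-- Upper bound on Stirling numbers of the second kind, in the form
`2 · #surjections(n, k) ≤ k! · C(n, k) · k^(n−k)` for `n > k ≥ 1`. -/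
theorem stmt_10 (n k : ℕ) (hk : 1 ≤ k) (hn : k < n) :
    2 * Nat.card {f : Fin n → Fin k // Function.Surjective f}
      ≤ k.factorial * n.choose k * k ^ (n - k) := by
  exact main n k hk hn
end

section
/- Let lo < hi be natural numbers. Then every natural number x with lo ≤ x < hi belongs to exactly one maximal dyadic interval contained in [lo, hi); consequently the maximal dyadic intervals contained in [lo, hi) are pairwise disjoint and their union is exactly the set {x : lo ≤ x < hi}. -/
/-- A dyadic interval of naturals: `{x : m·2^j ≤ x < (m+1)·2^j}`. -/
def IsDyadic (I : Set ℕ) : Prop :=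
  ∃ m j : ℕ, I = Set.Ico (m * 2 ^ j) ((m + 1) * 2 ^ j)

/-- A dyadic interval maximal inside `[lo, hi)`: it is contained in
`Ico lo hi` and no strictly larger dyadic interval is. -/
def IsMaxDyadic (lo hi : ℕ) (I : Set ℕ) : Prop :=
  IsDyadic I ∧ I ⊆ Set.Ico lo hi ∧
    ∀ J : Set ℕ, IsDyadic J → I ⊂ J → ¬ J ⊆ Set.Ico lo hi

/-- The canonical dyadic interval of level `j` containing `x`. -/
def D (x j : ℕ) : Set ℕ :=
  Set.Ico (x / 2 ^ j * 2 ^ j) ((x / 2 ^ j + 1) * 2 ^ j)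

lemma D_dyadic (x j : ℕ) : IsDyadic (D x j) := ⟨_, j, rfl⟩

lemma mem_D (x j : ℕ) : x ∈ D x j := by
  have hp : 0 < 2 ^ j := Nat.pow_pos (n := j) (by norm_num)
  refine ⟨Nat.div_mul_le_self x (2 ^ j), ?_⟩
  have h1 := Nat.lt_div_mul_add (a := x) hp
  have e : (x / 2 ^ j + 1) * 2 ^ j = x / 2 ^ j * 2 ^ j + 2 ^ j := by ring
  omega

lemma dyadic_eq_D {I : Set ℕ} (hI : IsDyadic I) {x : ℕ} (hx : x ∈ I) :
    ∃ j, I = D x j := by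
  obtain ⟨m, j, rfl⟩ := hI
  obtain ⟨h1, h2⟩ := hx
  have hm : x / 2 ^ j = m := Nat.div_eq_of_lt_le h1 h2
  exact ⟨j, by simp [D, hm]⟩

lemma D_mono (x : ℕ) {j j' : ℕ} (h : j ≤ j') : D x j ⊆ D x j' := by
  obtain ⟨k, rfl⟩ := Nat.exists_eq_add_of_le h
  set a := x / 2 ^ j with ha
  have hdd : x / 2 ^ (j + k) = a / 2 ^ k := by
    rw [pow_add, ← Nat.div_div_eq_div_mul]
  have hk : 0 < 2 ^ k := Nat.pow_pos (n := k) (by norm_num)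
  apply Set.Ico_subset_Ico
  · rw [hdd, pow_add]
    calc a / 2 ^ k * (2 ^ j * 2 ^ k) = a / 2 ^ k * 2 ^ k * 2 ^ j := by ring
    _ ≤ a * 2 ^ j := Nat.mul_le_mul_right _ (Nat.div_mul_le_self a (2 ^ k))
  · rw [hdd, pow_add]
    have h1 : a < a / 2 ^ k * 2 ^ k + 2 ^ k := Nat.lt_div_mul_add hk
    calc (a + 1) * 2 ^ j ≤ (a / 2 ^ k * 2 ^ k + 2 ^ k) * 2 ^ j :=
          Nat.mul_le_mul_right _ (by omega)
    _ = (a / 2 ^ k + 1) * (2 ^ j * 2 ^ k) := by ring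

lemma dyadic_comparable {I J : Set ℕ} (hI : IsDyadic I) (hJ : IsDyadic J)
    {x : ℕ} (hxI : x ∈ I) (hxJ : x ∈ J) : I ⊆ J ∨ J ⊆ I := by
  obtain ⟨j, rfl⟩ := dyadic_eq_D hI hxI
  obtain ⟨j', rfl⟩ := dyadic_eq_D hJ hxJ
  rcases le_total j j' with h | h
  · exact Or.inl (D_mono x h)
  · exact Or.inr (D_mono x h)

lemma D_subset_bound {lo hi x j : ℕ} (h : D x j ⊆ Set.Ico lo hi) : j ≤ hi := by
  have hx := mem_D x j
  have h1 := h hx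
  have h2 : (x / 2 ^ j + 1) * 2 ^ j - 1 ∈ D x j := by
    have hp : 0 < 2 ^ j := Nat.pow_pos (n := j) (by norm_num)
    constructor
    · have e : (x / 2 ^ j + 1) * 2 ^ j = x / 2 ^ j * 2 ^ j + 2 ^ j := by ring
      omega
    · have : 0 < (x / 2 ^ j + 1) * 2 ^ j := Nat.mul_pos (Nat.succ_pos _) hp
      omega
  have h3 := h h2
  have hle : 2 ^ j ≤ hi := by
    have e : (x / 2 ^ j + 1) * 2 ^ j = x / 2 ^ j * 2 ^ j + 2 ^ j := by ring
    obtain ⟨-, hlt⟩ := h3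
    omega
  have := Nat.lt_two_pow_self (n := j)
  omega

/-- For `x ∈ [lo, hi)`, the maximal dyadic interval containing `x`. -/
lemma exists_max_dyadic {lo hi : ℕ} {x : ℕ} (hx : x ∈ Set.Ico lo hi) :
    ∃ I, IsMaxDyadic lo hi I ∧ x ∈ I := by
  classical
  set P : ℕ → Prop := fun j => D x j ⊆ Set.Ico lo hi with hP
  have hP0 : P 0 := by
    intro y hy
    have : y = x := by
      obtain ⟨h1, h2⟩ := hy
      simp [D, Nat.div_one] at h1 h2 ⊢
      omega
    exact this ▸ hx
  set jm := Nat.findGreatest P hi with hjm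
  have hPjm : P jm := Nat.findGreatest_spec (Nat.zero_le hi) hP0
  refine ⟨D x jm, ⟨D_dyadic x jm, hPjm, ?_⟩, mem_D x jm⟩
  intro J hJdy hss hJsub
  have hxJ : x ∈ J := hss.1 (mem_D x jm)
  obtain ⟨j', rfl⟩ := dyadic_eq_D hJdy hxJ
  have hj' : jm < j' := by
    by_contra hc
    push_neg at hc
    exact hss.2 (D_mono x hc)
  have hle : j' ≤ hi := D_subset_bound hJsub
  exact Nat.findGreatest_is_greatest hj' hle hJsub

lemma max_dyadic_unique {lo hi : ℕ} {x : ℕ} {I I' : Set ℕ}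
    (hI : IsMaxDyadic lo hi I) (hxI : x ∈ I)
    (hI' : IsMaxDyadic lo hi I') (hxI' : x ∈ I') : I = I' := by
  rcases dyadic_comparable hI.1 hI'.1 hxI hxI' with hss | hss
  · by_contra hne
    exact hI.2.2 I' hI'.1 (ssubset_of_subset_of_ne hss hne) hI'.2.1
  · by_contra hne
    exact hI'.2.2 I hI.1 (ssubset_of_subset_of_ne hss (Ne.symm hne)) hI.2.1

/-- Every `x ∈ [lo, hi)` belongs to exactly one maximal dyadic interval of
`[lo, hi)`; hence the maximal dyadic intervals are pairwise disjoint and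
their union is exactly `[lo, hi)`. -/
theorem stmt_13 (lo hi : ℕ) (h : lo < hi) :
    (∀ x, x ∈ Set.Ico lo hi → ∃! I : Set ℕ, IsMaxDyadic lo hi I ∧ x ∈ I) ∧
    ({I : Set ℕ | IsMaxDyadic lo hi I}.Pairwise Disjoint) ∧
    (⋃₀ {I : Set ℕ | IsMaxDyadic lo hi I} = Set.Ico lo hi) := by
  refine ⟨?_, ?_, ?_⟩
  · intro x hx
    obtain ⟨I, hI, hxI⟩ := exists_max_dyadic hx
    exact ⟨I, ⟨hI, hxI⟩, fun J ⟨hJ, hxJ⟩ => max_dyadic_unique hJ hxJ hI hxI⟩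
  · intro I hI I' hI' hne
    rw [Set.disjoint_left]
    intro x hxI hxI'
    exact hne (max_dyadic_unique hI hxI hI' hxI')
  · ext x
    simp only [Set.mem_sUnion, Set.mem_setOf_eq]
    constructor
    · rintro ⟨I, hI, hxI⟩
      exact hI.2.1 hxI
    · intro hx
      obtain ⟨I, hI, hxI⟩ := exists_max_dyadic hx
      exact ⟨I, hI, hxI⟩
end

section
/- Let lo < hi be natural numbers and let b be a natural number. Then lo ≤ b < hi if and only if there exists a natural number j with 2^j ≤ hi − lo such that the dyadic interval of size 2^j containing b, namely Ico (2^j·(b / 2^j)) (2^j·(b / 2^j) + 2^j), is a maximal dyadic interval contained in [lo, hi). -/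
private lemma mem_iff_div_eq (b x k : ℕ) :
    x ∈ Set.Ico (2 ^ k * (b / 2 ^ k)) (2 ^ k * (b / 2 ^ k) + 2 ^ k) ↔
      x / 2 ^ k = b / 2 ^ k := by
  have hp : 0 < 2 ^ k := Nat.pow_pos (n := k) (by norm_num)
  have hc : 2 ^ k * (b / 2 ^ k) = b / 2 ^ k * 2 ^ k := Nat.mul_comm _ _
  constructor
  · rintro ⟨h1, h2⟩
    exact Nat.div_eq_of_lt_le (by omega) (by rw [Nat.succ_mul]; omega)
  · intro hx
    have h1 := Nat.div_add_mod x (2 ^ k)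
    have h2 := Nat.mod_lt x hp
    rw [← hx]
    constructor <;> omega

private lemma mem_self (b k : ℕ) :
    b ∈ Set.Ico (2 ^ k * (b / 2 ^ k)) (2 ^ k * (b / 2 ^ k) + 2 ^ k) :=
  (mem_iff_div_eq b b k).2 rfl

private lemma mono_div (b : ℕ) {k k' : ℕ} (hk : k ≤ k') :
    Set.Ico (2 ^ k * (b / 2 ^ k)) (2 ^ k * (b / 2 ^ k) + 2 ^ k) ⊆
      Set.Ico (2 ^ k' * (b / 2 ^ k')) (2 ^ k' * (b / 2 ^ k') + 2 ^ k') := by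
  intro x hx
  rw [mem_iff_div_eq] at hx ⊢
  obtain ⟨d, rfl⟩ := Nat.exists_eq_add_of_le hk
  rw [pow_add, ← Nat.div_div_eq_div_mul, ← Nat.div_div_eq_div_mul, hx]

/-- Correctness of the integer DA-PSI membership test: `lo ≤ b < hi` iff for
some `j` with `2^j ≤ hi − lo`, the size-`2^j` dyadic interval containing `b`
is a maximal dyadic interval of `[lo, hi)`. -/
theorem stmt_14 (lo hi : ℕ) (h : lo < hi) (b : ℕ) :
    (lo ≤ b ∧ b < hi) ↔
      ∃ j : ℕ, 2 ^ j ≤ hi - lo ∧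
        IsMaxDyadic lo hi
          (Set.Ico (2 ^ j * (b / 2 ^ j)) (2 ^ j * (b / 2 ^ j) + 2 ^ j)) := by
  constructor
  · rintro ⟨hlo, hhi⟩
    -- the arithmetic predicate: the level-k interval of b is inside [lo, hi)
    set P : ℕ → Prop := fun k => lo ≤ 2 ^ k * (b / 2 ^ k) ∧ 2 ^ k * (b / 2 ^ k) + 2 ^ k ≤ hi
      with hP
    have hP0 : P 0 := by simp [hP]; omega
    -- any k with P k satisfies k < hi
    have hbound : ∀ k, P k → k ≤ hi := by
      intro k hk
      have h2 : 2 ^ k ≤ hi := by have := hk.1; have := hk.2; omega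
      exact le_trans (le_of_lt (Nat.lt_two_pow_self (n := k))) h2
    set j := Nat.findGreatest P hi with hj
    have hPj : P j := Nat.findGreatest_spec (Nat.zero_le hi) hP0
    have hmax : ∀ k, j < k → ¬ P k := by
      intro k hk hPk
      exact Nat.findGreatest_is_greatest hk (hbound k hPk) hPk
    refine ⟨j, by have := hPj.1; have := hPj.2; omega, ?_, ?_, ?_⟩
    · exact ⟨b / 2 ^ j, j, by rw [Nat.succ_mul, Nat.mul_comm]⟩
    · intro x hx
      obtain ⟨h1, h2⟩ := hx
      exact ⟨by have := hPj.1; omega, by have := hPj.2; omega⟩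
    · rintro J ⟨m, k, rfl⟩ hJ hsub
      have hbJ : b ∈ Set.Ico (m * 2 ^ k) ((m + 1) * 2 ^ k) :=
        hJ.1 (mem_self b j)
      have hm : b / 2 ^ k = m := by
        obtain ⟨h1, h2⟩ := hbJ
        exact Nat.div_eq_of_lt_le h1 h2
      have hJeq : Set.Ico (m * 2 ^ k) ((m + 1) * 2 ^ k) =
          Set.Ico (2 ^ k * (b / 2 ^ k)) (2 ^ k * (b / 2 ^ k) + 2 ^ k) := by
        rw [hm, Nat.succ_mul, Nat.mul_comm]
      rcases le_or_gt k j with hkj | hjk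
      · -- J ⊆ I, contradicting strictness
        have hsub2 : Set.Ico (m * 2 ^ k) ((m + 1) * 2 ^ k) ⊆
            Set.Ico (2 ^ j * (b / 2 ^ j)) (2 ^ j * (b / 2 ^ j) + 2 ^ j) := by
          rw [hJeq]; exact mono_div b hkj
        exact absurd (hsub2.antisymm hJ.1) (by
          intro hcontra
          exact hJ.2 (by rw [hcontra]))
      · -- k > j, so P k holds, contradicting maximality
        apply hmax k hjk
        have hp : 0 < 2 ^ k := Nat.pow_pos (n := k) (by norm_num)
        rw [hJeq] at hsub
        have h1 := hsub (show 2 ^ k * (b / 2 ^ k) ∈ _ from ⟨le_refl _, by omega⟩)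
        have h2 := hsub (show 2 ^ k * (b / 2 ^ k) + 2 ^ k - 1 ∈ _ from ⟨by omega, by omega⟩)
        exact ⟨h1.1, by have := h2.2; omega⟩
  · rintro ⟨j, hjle, _, hsub, _⟩
    have hb := hsub (mem_self b j)
    exact ⟨hb.1, hb.2⟩
end

section
/- Let k and d be natural numbers with d < 2^k. Then the number of maximal dyadic intervals contained in [2^k, 2^k + d) equals the number of maximal dyadic intervals contained in [0, d); an explicit bijection is given by translating each interval by 2^k. -/
lemma image_add_Ico (a b c : ℕ) : (· + c) '' Set.Ico a b = Set.Ico (a + c) (b + c) := by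
  ext y
  simp only [Set.mem_image, Set.mem_Ico]
  constructor
  · rintro ⟨x, hx, rfl⟩; omega
  · intro hy; exact ⟨y - c, ⟨by omega, by omega⟩, by omega⟩

lemma hinj (c : ℕ) : Function.Injective (· + c) := fun a b hab => by
  have h : a + c = b + c := hab
  omega

lemma dyadic_up (k d : ℕ) (hd : d < 2 ^ k) {I : Set ℕ} (hI : IsDyadic I)
    (hsub : I ⊆ Set.Ico 0 d) : IsDyadic ((· + 2 ^ k) '' I) := by
  obtain ⟨m, j, rfl⟩ := hI
  have hp : 0 < 2 ^ j := Nat.two_pow_pos j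
  have hmem : (m + 1) * 2 ^ j - 1 ∈ Set.Ico (m * 2 ^ j) ((m + 1) * 2 ^ j) := by
    simp only [Set.mem_Ico, add_mul, one_mul]; omega
  have h1 : (m + 1) * 2 ^ j ≤ d := by
    have := hsub hmem
    simp only [Set.mem_Ico, add_mul, one_mul] at this ⊢
    omega
  have hjk : j ≤ k := by
    by_contra hc
    have h2 : 2 ^ k < 2 ^ j := Nat.pow_lt_pow_right one_lt_two (by omega)
    have h3 : 2 ^ j ≤ (m + 1) * 2 ^ j := Nat.le_mul_of_pos_left _ (by omega)
    omega
  have h2k : 2 ^ (k - j) * 2 ^ j = 2 ^ k := by rw [← pow_add]; congr 1; omega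
  refine ⟨m + 2 ^ (k - j), j, ?_⟩
  rw [image_add_Ico]
  have e1 : (m + 2 ^ (k - j)) * 2 ^ j = m * 2 ^ j + 2 ^ k := by rw [add_mul, h2k]
  have e2 : (m + 2 ^ (k - j) + 1) * 2 ^ j = (m + 1) * 2 ^ j + 2 ^ k := by
    simp only [add_mul, one_mul, h2k]; omega
  rw [e1, e2]

lemma dyadic_down (k d : ℕ) (hd : d < 2 ^ k) {J : Set ℕ} (hJ : IsDyadic J)
    (hsub : J ⊆ Set.Ico (2 ^ k) (2 ^ k + d)) :
    ∃ I : Set ℕ, IsDyadic I ∧ I ⊆ Set.Ico 0 d ∧ J = (· + 2 ^ k) '' I := by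
  obtain ⟨m, j, rfl⟩ := hJ
  have hp : 0 < 2 ^ j := Nat.two_pow_pos j
  have hlo := hsub (show m * 2 ^ j ∈ _ by simp only [Set.mem_Ico, add_mul, one_mul]; omega)
  have hhi := hsub (show (m + 1) * 2 ^ j - 1 ∈ _ by
    simp only [Set.mem_Ico, add_mul, one_mul]; omega)
  simp only [Set.mem_Ico, add_mul, one_mul] at hlo hhi
  have hjk : j ≤ k := by
    by_contra hc
    have h2 : 2 ^ k < 2 ^ j := Nat.pow_lt_pow_right one_lt_two (by omega)
    have h3 : 2 ^ j ≤ (m + 1) * 2 ^ j := Nat.le_mul_of_pos_left _ (by omega)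
    have h4 : 2 ^ j ≤ m * 2 ^ j := Nat.le_mul_of_pos_left _ (by
      rcases Nat.eq_zero_or_pos m with rfl | hm
      · exfalso; simp only [Nat.zero_mul] at hlo; omega
      · exact hm)
    omega
  have h2k : 2 ^ (k - j) * 2 ^ j = 2 ^ k := by rw [← pow_add]; congr 1; omega
  have hlo1 : 2 ^ k ≤ m * 2 ^ j := hlo.1
  have hup : m * 2 ^ j + 2 ^ j ≤ 2 ^ k + d := by omega
  have hm : 2 ^ (k - j) ≤ m := by
    have h5 : 2 ^ (k - j) * 2 ^ j ≤ m * 2 ^ j := by omega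
    exact Nat.le_of_mul_le_mul_right h5 hp
  have e1 : (m - 2 ^ (k - j)) * 2 ^ j = m * 2 ^ j - 2 ^ k := by rw [Nat.sub_mul, h2k]
  have e2 : (m - 2 ^ (k - j) + 1) * 2 ^ j = m * 2 ^ j + 2 ^ j - 2 ^ k := by
    simp only [add_mul, one_mul, Nat.sub_mul, h2k]
    omega
  refine ⟨Set.Ico ((m - 2 ^ (k - j)) * 2 ^ j) ((m - 2 ^ (k - j) + 1) * 2 ^ j),
    ⟨m - 2 ^ (k - j), j, rfl⟩, ?_, ?_⟩
  · intro x hx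
    rw [e1, e2] at hx
    simp only [Set.mem_Ico] at hx ⊢
    have h6 := hlo1
    have h7 := hup
    generalize hM : m * 2 ^ j = M at hx h6 h7
    omega
  · rw [image_add_Ico, e1, e2]
    have g1 : m * 2 ^ j - 2 ^ k + 2 ^ k = m * 2 ^ j := Nat.sub_add_cancel hlo1
    have g2 : m * 2 ^ j + 2 ^ j - 2 ^ k + 2 ^ k = m * 2 ^ j + 2 ^ j :=
      Nat.sub_add_cancel (by omega)
    rw [g1, g2, add_mul, one_mul]

lemma main_iff (k d : ℕ) (h : d < 2 ^ k) (I : Set ℕ) :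
    IsMaxDyadic 0 d I ↔ IsMaxDyadic (2 ^ k) (2 ^ k + d) ((· + 2 ^ k) '' I) := by
  constructor
  · rintro ⟨hdy, hsub, hmax⟩
    refine ⟨dyadic_up k d h hdy hsub, ?_, ?_⟩
    · rintro y ⟨x, hx, rfl⟩
      have := hsub hx
      simp only [Set.mem_Ico] at this ⊢
      omega
    · intro J hJdy hss hJsub
      obtain ⟨I', hI'dy, hI'sub, rfl⟩ := dyadic_down k d h hJdy hJsub
      have hss' : I ⊂ I' := by
        refine ⟨(Set.image_subset_image_iff (hinj (2 ^ k))).mp hss.1, fun hc => ?_⟩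
        exact hss.2 (Set.image_mono hc)
      exact hmax I' hI'dy hss' hI'sub
  · rintro ⟨hdy, hsub, hmax⟩
    obtain ⟨I', hI'dy, hI'sub, heq⟩ := dyadic_down k d h hdy hsub
    have hII : I = I' := (hinj (2 ^ k)).image_injective heq
    subst hII
    refine ⟨hI'dy, hI'sub, ?_⟩
    intro J hJdy hss hJsub
    refine hmax ((· + 2 ^ k) '' J) (dyadic_up k d h hJdy hJsub) ?_ ?_
    · refine ⟨Set.image_mono hss.1, fun hc => ?_⟩
      exact hss.2 ((Set.image_subset_image_iff (hinj (2 ^ k))).mp hc)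
    · rintro y ⟨x, hx, rfl⟩
      have := hJsub hx
      simp only [Set.mem_Ico] at this ⊢
      omega

/-- Lemma `trie_similarity`: for `d < 2^k`, the maximal dyadic intervals of
`[2^k, 2^k + d)` and of `[0, d)` are equinumerous, via translation by `2^k`. -/
theorem stmt_15 (k d : ℕ) (h : d < 2 ^ k) :
    Nat.card {I : Set ℕ // IsMaxDyadic (2 ^ k) (2 ^ k + d) I}
      = Nat.card {I : Set ℕ // IsMaxDyadic 0 d I} ∧
    ∀ I : Set ℕ,
      IsMaxDyadic 0 d I ↔ IsMaxDyadic (2 ^ k) (2 ^ k + d) ((· + 2 ^ k) '' I) := by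
  refine ⟨?_, main_iff k d h⟩
  have himg : ∀ J : Set ℕ, J ⊆ Set.Ico (2 ^ k) (2 ^ k + d) →
      (· + 2 ^ k) '' {x | x + 2 ^ k ∈ J} = J := by
    intro J hJ
    ext y
    constructor
    · rintro ⟨x, hx, rfl⟩; exact hx
    · intro hy
      have := hJ hy
      simp only [Set.mem_Ico] at this
      refine ⟨y - 2 ^ k, ?_, ?_⟩
      · show y - 2 ^ k + 2 ^ k ∈ J
        rwa [Nat.sub_add_cancel this.1]
      · show y - 2 ^ k + 2 ^ k = y
        omega
  refine Nat.card_congr (Equiv.symm ⟨fun I => ⟨(· + 2 ^ k) '' I.1, (main_iff k d h I.1).mp I.2⟩,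
    fun J => ⟨{x | x + 2 ^ k ∈ J.1}, ?_⟩, fun I => ?_, fun J => ?_⟩)
  · refine (main_iff k d h _).mpr ?_
    rw [himg J.1 J.2.2.1]
    exact J.2
  · ext x
    simp only [Set.mem_setOf_eq, Set.mem_image]
    constructor
    · rintro ⟨a, ha, hax⟩
      have : a = x := by omega
      rwa [← this]
    · intro hx; exact ⟨x, hx, rfl⟩
  · apply Subtype.ext
    exact himg J.1 J.2.2.1
end

section
/- For every natural number d ≥ 1, the number of maximal dyadic intervals contained in [0, d) equals 1 plus the number of maximal dyadic intervals contained in [0, d − 2^(⌊log₂ d⌋)), where ⌊log₂ d⌋ = Nat.log 2 d. -/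
lemma dyadic_lt (m j : ℕ) : m * 2 ^ j < (m + 1) * 2 ^ j := by
  have h2j : (0:ℕ) < 2 ^ j := Nat.two_pow_pos j
  nlinarith

lemma dyadic_subset_iff (m j d : ℕ) :
    Set.Ico (m * 2 ^ j) ((m + 1) * 2 ^ j) ⊆ Set.Ico 0 d ↔ (m + 1) * 2 ^ j ≤ d := by
  rw [Set.Ico_subset_Ico_iff (dyadic_lt m j)]
  simp

lemma parent_subset {m j : ℕ} {J : Set ℕ} (hJ : IsDyadic J)
    (hsub : Set.Ico (m * 2 ^ j) ((m + 1) * 2 ^ j) ⊂ J) :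
    Set.Ico (m / 2 * 2 ^ (j + 1)) ((m / 2 + 1) * 2 ^ (j + 1)) ⊆ J := by
  obtain ⟨n, k, rfl⟩ := hJ
  obtain ⟨h1, h2⟩ := (Set.Ico_subset_Ico_iff (dyadic_lt m j)).mp hsub.subset
  -- first show j < k
  have hjk : j < k := by
    rcases Nat.lt_or_ge j k with h | h
    · exact h
    · exfalso
      have hk2j : (2:ℕ) ^ k ≤ 2 ^ j := Nat.pow_le_pow_right (by norm_num) h
      have hlen : (2:ℕ) ^ j ≤ 2 ^ k := by nlinarith
      have hjk' : j = k := le_antisymm (Nat.pow_le_pow_iff_right (by norm_num) |>.mp hlen) h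
      subst hjk'
      have hmn : n = m := by
        have h2j : (0:ℕ) < 2 ^ j := Nat.two_pow_pos j
        have := Nat.le_of_mul_le_mul_right h1 h2j
        have := Nat.le_of_mul_le_mul_right h2 h2j
        omega
      subst hmn
      exact hsub.ne rfl
  obtain ⟨e, rfl⟩ : ∃ e, k = j + 1 + e := ⟨k - (j + 1), by omega⟩
  have hpow : (2:ℕ) ^ (j + 1 + e) = 2 ^ e * 2 * 2 ^ j := by ring
  have h2j : (0:ℕ) < 2 ^ j := Nat.two_pow_pos j
  apply Set.Ico_subset_Ico
  · -- n * 2^k ≤ m/2 * 2^(j+1)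
    have hle : n * (2 ^ e * 2) ≤ m := by
      have : n * (2 ^ e * 2) * 2 ^ j ≤ m * 2 ^ j := by rw [hpow] at h1; nlinarith
      exact Nat.le_of_mul_le_mul_right this h2j
    have : n * 2 ^ e ≤ m / 2 := Nat.le_div_iff_mul_le (by norm_num) |>.mpr (by nlinarith)
    calc n * 2 ^ (j + 1 + e) = n * 2 ^ e * 2 ^ (j + 1) := by ring
      _ ≤ m / 2 * 2 ^ (j + 1) := Nat.mul_le_mul_right _ this
  · -- (m/2+1) * 2^(j+1) ≤ (n+1) * 2^k
    have hle : m + 1 ≤ (n + 1) * (2 ^ e * 2) := by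
      have : (m + 1) * 2 ^ j ≤ (n + 1) * (2 ^ e * 2) * 2 ^ j := by rw [hpow] at h2; nlinarith
      exact Nat.le_of_mul_le_mul_right this h2j
    have : m / 2 < (n + 1) * 2 ^ e := Nat.div_lt_iff_lt_mul (by norm_num) |>.mpr (by nlinarith)
    calc (m / 2 + 1) * 2 ^ (j + 1) ≤ (n + 1) * 2 ^ e * 2 ^ (j + 1) := by
          apply Nat.mul_le_mul_right; omega
      _ = (n + 1) * 2 ^ (j + 1 + e) := by ring

lemma subset_parent (m j : ℕ) :
    Set.Ico (m * 2 ^ j) ((m + 1) * 2 ^ j)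
      ⊂ Set.Ico (m / 2 * 2 ^ (j + 1)) ((m / 2 + 1) * 2 ^ (j + 1)) := by
  have h2j : (0:ℕ) < 2 ^ j := Nat.two_pow_pos j
  have hdiv : m / 2 * 2 ≤ m := Nat.div_mul_le_self m 2
  have hdiv2 : m < (m / 2 + 1) * 2 := by
    have : m / 2 < m / 2 + 1 := Nat.lt_succ_self _
    exact (Nat.div_lt_iff_lt_mul (by norm_num)).mp this
  have hsub : Set.Ico (m * 2 ^ j) ((m + 1) * 2 ^ j)
      ⊆ Set.Ico (m / 2 * 2 ^ (j + 1)) ((m / 2 + 1) * 2 ^ (j + 1)) := by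
    apply Set.Ico_subset_Ico
    · calc m / 2 * 2 ^ (j + 1) = m / 2 * 2 * 2 ^ j := by ring
        _ ≤ m * 2 ^ j := Nat.mul_le_mul_right _ hdiv
    · calc (m + 1) * 2 ^ j ≤ (m / 2 + 1) * 2 * 2 ^ j := Nat.mul_le_mul_right _ (by omega)
        _ = (m / 2 + 1) * 2 ^ (j + 1) := by ring
  refine hsub.ssubset_of_ne ?_
  intro heq
  rw [Set.Ico_eq_Ico_iff (Or.inl (dyadic_lt m j))] at heq
  obtain ⟨ha, hb⟩ := heq
  have e1 : (m + 1) * 2 ^ j = m * 2 ^ j + 2 ^ j := by ring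
  have e2 : (m / 2 + 1) * 2 ^ (j + 1) = m / 2 * 2 ^ (j + 1) + 2 ^ j + 2 ^ j := by ring
  omega

lemma isMaxDyadic_iff (m j d : ℕ) :
    IsMaxDyadic 0 d (Set.Ico (m * 2 ^ j) ((m + 1) * 2 ^ j)) ↔
      (m + 1) * 2 ^ j ≤ d ∧ d < (m / 2 + 1) * 2 ^ (j + 1) := by
  constructor
  · rintro ⟨-, hsub, hmax⟩
    refine ⟨(dyadic_subset_iff m j d).mp hsub, ?_⟩
    by_contra hcon
    push_neg at hcon
    exact hmax _ ⟨m / 2, j + 1, rfl⟩ (subset_parent m j)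
      ((dyadic_subset_iff (m / 2) (j + 1) d).mpr hcon)
  · rintro ⟨h1, h2⟩
    refine ⟨⟨m, j, rfl⟩, (dyadic_subset_iff m j d).mpr h1, ?_⟩
    intro J hJ hss hJsub
    have hpar := (parent_subset hJ hss).trans hJsub
    exact absurd ((dyadic_subset_iff (m / 2) (j + 1) d).mp hpar) (by omega)

lemma maxDyadic_finite (d : ℕ) : {I : Set ℕ | IsMaxDyadic 0 d I}.Finite := by
  apply Set.Finite.subset (Set.Finite.image (fun p : ℕ × ℕ => Set.Ico p.1 p.2)
    ((Set.finite_Iic d).prod (Set.finite_Iic d)))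
  rintro I ⟨⟨m, j, rfl⟩, hsub, -⟩
  have h1 : (m + 1) * 2 ^ j ≤ d := (dyadic_subset_iff m j d).mp hsub
  have h0 : m * 2 ^ j ≤ d := le_trans (le_of_lt (dyadic_lt m j)) h1
  exact ⟨(m * 2 ^ j, (m + 1) * 2 ^ j), ⟨h0, h1⟩, rfl⟩

lemma key (d : ℕ) (hd : 1 ≤ d) :
    {I : Set ℕ | IsMaxDyadic 0 d I}
      = insert (Set.Ico 0 (2 ^ Nat.log 2 d))
          ((fun I => (fun x => x + 2 ^ Nat.log 2 d) '' I) ''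
            {I : Set ℕ | IsMaxDyadic 0 (d - 2 ^ Nat.log 2 d) I}) := by
  set L := Nat.log 2 d with hL
  have hpow : 2 ^ L ≤ d := Nat.pow_log_le_self 2 (by omega)
  have hlt : d < 2 ^ (L + 1) := Nat.lt_pow_succ_log_self (by norm_num) d
  ext I
  constructor
  · rintro ⟨⟨m, j, rfl⟩, hsub, hmax⟩
    obtain ⟨h1, h2⟩ := (isMaxDyadic_iff m j d).mp ⟨⟨m, j, rfl⟩, hsub, hmax⟩
    rcases Nat.eq_zero_or_pos m with hm | hm
    · subst hm
      left
      have hjL : L = j := Nat.log_eq_of_pow_le_of_lt_pow (by simpa using h1) (by simpa using h2)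
      rw [hjL]; norm_num
    · right
      have h2j : (0:ℕ) < 2 ^ j := Nat.two_pow_pos j
      have hj1 : j + 1 ≤ L := by
        have : (2:ℕ) ^ (j + 1) ≤ d := le_trans (by nlinarith [pow_succ 2 j]) h1
        exact (Nat.le_log_iff_pow_le (by norm_num) (by omega)).mpr this
      obtain ⟨e, he⟩ : ∃ e, L = j + 1 + e := ⟨L - (j + 1), by omega⟩
      have hpowL : (2:ℕ) ^ L = 2 ^ e * 2 * 2 ^ j := by rw [he]; ring
      have hpowL' : (2:ℕ) ^ L = 2 ^ e * 2 ^ (j + 1) := by rw [he]; ring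
      have hge : 2 ^ e * 2 ≤ m := by
        by_contra hcon
        push_neg at hcon
        have hm2 : m / 2 < 2 ^ e := Nat.div_lt_iff_lt_mul (by norm_num) |>.mpr hcon
        have : (m / 2 + 1) * 2 ^ (j + 1) ≤ 2 ^ e * 2 ^ (j + 1) :=
          Nat.mul_le_mul_right _ (by omega)
        rw [← hpowL'] at this
        omega
      set m' := m - 2 ^ e * 2 with hm'
      have hmm : m = m' + 2 ^ e * 2 := by omega
      have hdiv : m / 2 = m' / 2 + 2 ^ e := by
        rw [hmm, Nat.add_mul_div_right _ _ (by norm_num)]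
      refine ⟨Set.Ico (m' * 2 ^ j) ((m' + 1) * 2 ^ j), ?_, ?_⟩
      · apply (isMaxDyadic_iff m' j (d - 2 ^ L)).mpr
        constructor
        · have : (m' + 1) * 2 ^ j + 2 ^ L = (m + 1) * 2 ^ j := by
            rw [hmm, hpowL]; ring
          omega
        · have : (m' / 2 + 1) * 2 ^ (j + 1) + 2 ^ L = (m / 2 + 1) * 2 ^ (j + 1) := by
            rw [hdiv, hpowL']; ring
          omega
      · show (fun x => x + 2 ^ L) '' _ = _
        have ea : m' * 2 ^ j + 2 ^ L = m * 2 ^ j := by rw [hmm, hpowL]; ring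
        have eb : (m' + 1) * 2 ^ j + 2 ^ L = (m + 1) * 2 ^ j := by rw [hmm, hpowL]; ring
        rw [Set.image_add_const_Ico, ea, eb]
  · rintro (rfl | ⟨I', hI', rfl⟩)
    · have : IsMaxDyadic 0 d (Set.Ico (0 * 2 ^ L) ((0 + 1) * 2 ^ L)) := by
        apply (isMaxDyadic_iff 0 L d).mpr
        constructor
        · simpa using hpow
        · simpa using hlt
      simpa using this
    · obtain ⟨m', j, rfl⟩ := hI'.1
      obtain ⟨h1, h2⟩ := (isMaxDyadic_iff m' j (d - 2 ^ L)).mp hI'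
      have h2j : (0:ℕ) < 2 ^ j := Nat.two_pow_pos j
      have hj1 : j + 1 ≤ L := by
        have hjle : (2:ℕ) ^ j ≤ d - 2 ^ L := le_trans (by nlinarith) h1
        have hdL : d - 2 ^ L < 2 ^ L := by
          have : (2:ℕ) ^ (L + 1) = 2 ^ L + 2 ^ L := by ring
          omega
        have : (2:ℕ) ^ j < 2 ^ L := by omega
        have := (Nat.pow_lt_pow_iff_right (by norm_num : 1 < 2)).mp this
        omega
      obtain ⟨e, he⟩ : ∃ e, L = j + 1 + e := ⟨L - (j + 1), by omega⟩
      have hpowL : (2:ℕ) ^ L = 2 ^ e * 2 * 2 ^ j := by rw [he]; ring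
      have hpowL' : (2:ℕ) ^ L = 2 ^ e * 2 ^ (j + 1) := by rw [he]; ring
      set m := m' + 2 ^ e * 2 with hm
      have hdiv : m / 2 = m' / 2 + 2 ^ e := Nat.add_mul_div_right _ _ (by norm_num)
      have ea : m' * 2 ^ j + 2 ^ L = m * 2 ^ j := by rw [hm, hpowL]; ring
      have eb : (m' + 1) * 2 ^ j + 2 ^ L = (m + 1) * 2 ^ j := by rw [hm, hpowL]; ring
      have himg : (fun x => x + 2 ^ L) '' Set.Ico (m' * 2 ^ j) ((m' + 1) * 2 ^ j)
          = Set.Ico (m * 2 ^ j) ((m + 1) * 2 ^ j) := by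
        rw [Set.image_add_const_Ico, ea, eb]
      simp only [Set.mem_setOf_eq]
      rw [himg]
      apply (isMaxDyadic_iff m j d).mpr
      constructor
      · have : (m + 1) * 2 ^ j = (m' + 1) * 2 ^ j + 2 ^ L := by rw [hm, hpowL]; ring
        omega
      · have : (m / 2 + 1) * 2 ^ (j + 1) = (m' / 2 + 1) * 2 ^ (j + 1) + 2 ^ L := by
          rw [hdiv, hpowL']; ring
        omega

/-- Recursion from Lemma `number_enclosing_trees_more_than`:
`N(T_{0,d}) = 1 + N(T_{0, d − 2^{⌊log₂ d⌋}})` for `d ≥ 1`. -/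
theorem stmt_16 (d : ℕ) (hd : 1 ≤ d) :
    Nat.card {I : Set ℕ // IsMaxDyadic 0 d I}
      = 1 + Nat.card {I : Set ℕ // IsMaxDyadic 0 (d - 2 ^ Nat.log 2 d) I} := by
  set L := Nat.log 2 d with hL
  set T := {I : Set ℕ | IsMaxDyadic 0 (d - 2 ^ L) I} with hT
  have hTfin : T.Finite := maxDyadic_finite _
  have hinj : Function.Injective (fun I : Set ℕ => (fun x => x + 2 ^ L) '' I) :=
    Set.image_injective.mpr (add_left_injective _)
  have hnotmem : Set.Ico 0 (2 ^ L) ∉ (fun I : Set ℕ => (fun x => x + 2 ^ L) '' I) '' T := by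
    rintro ⟨I', hI', heq⟩
    have h0 : (0 : ℕ) ∈ Set.Ico 0 (2 ^ L) := by
      simp [Nat.two_pow_pos L]
    rw [← heq] at h0
    obtain ⟨x, -, hx⟩ := h0
    simp only [] at hx
    have : (0:ℕ) < 2 ^ L := Nat.two_pow_pos L
    omega
  have e1 : Nat.card {I : Set ℕ // IsMaxDyadic 0 d I}
      = ({I : Set ℕ | IsMaxDyadic 0 d I}).ncard := Nat.card_coe_set_eq _
  have e2 : Nat.card {I : Set ℕ // IsMaxDyadic 0 (d - 2 ^ L) I} = T.ncard :=
    Nat.card_coe_set_eq _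
  rw [e1, e2, key d hd, ← hL, ← hT,
    Set.ncard_insert_of_notMem hnotmem (hTfin.image _),
    Set.ncard_image_of_injective _ hinj]
  omega
end

section
/- For every natural number d ≥ 1, the number of maximal dyadic intervals contained in [0, d) is at most ⌊log₂ d⌋ + 1, where ⌊log₂ d⌋ = Nat.log 2 d. -/
lemma max_spec (d : ℕ) (I : Set ℕ) (h : IsMaxDyadic 0 d I) :
    ∃ j m : ℕ, I = Set.Ico (m * 2 ^ j) ((m + 1) * 2 ^ j) ∧
      (m + 1) * 2 ^ j ≤ d ∧ d < (m + 2) * 2 ^ j := by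
  obtain ⟨⟨m, j, rfl⟩, hsub, hmax⟩ := h
  have hp : 0 < 2 ^ j := Nat.pow_pos (by norm_num)
  have hub : (m + 1) * 2 ^ j ≤ d := by
    have hlt : m * 2 ^ j < (m + 1) * 2 ^ j := by nlinarith
    have hmem : (m + 1) * 2 ^ j - 1 ∈ Set.Ico (m * 2 ^ j) ((m + 1) * 2 ^ j) := by
      constructor <;> omega
    have := hsub hmem
    simp only [Set.mem_Ico] at this
    omega
  have heven : m % 2 = 0 := by
    by_contra hodd
    have hmk : m = 2 * (m / 2) + 1 := by omega
    set k := m / 2 with hk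
    have hJ : IsDyadic (Set.Ico (k * 2 ^ (j + 1)) ((k + 1) * 2 ^ (j + 1))) :=
      ⟨k, j + 1, rfl⟩
    have hsubJ : Set.Ico (k * 2 ^ (j + 1)) ((k + 1) * 2 ^ (j + 1)) ⊆ Set.Ico 0 d := by
      intro x hx
      simp only [Set.mem_Ico] at *
      have hx2 := hx.2
      rw [pow_succ] at hx2
      constructor
      · omega
      · have : (k + 1) * (2 ^ j * 2) = (m + 1) * 2 ^ j := by rw [hmk]; ring
        omega
    refine hmax _ hJ ?_ hsubJ
    constructor
    · intro x hx
      simp only [Set.mem_Ico, pow_succ] at *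
      constructor
      · have : k * (2 ^ j * 2) = (m - 1) * 2 ^ j := by
          rw [hmk]; simp; ring
        nlinarith [hx.1]
      · have : (k + 1) * (2 ^ j * 2) = (m + 1) * 2 ^ j := by rw [hmk]; ring
        omega
    · intro hcon
      have hmem : k * 2 ^ (j + 1) ∈ Set.Ico (k * 2 ^ (j + 1)) ((k + 1) * 2 ^ (j + 1)) := by
        constructor
        · exact le_refl _
        · have : 0 < 2 ^ (j + 1) := Nat.pow_pos (by norm_num)
          nlinarith
      have := hcon hmem
      simp only [Set.mem_Ico, pow_succ] at this
      have hlt : k * (2 ^ j * 2) < m * 2 ^ j := by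
        rw [hmk]; nlinarith
      omega
  -- now m is even; the parent interval must escape [0, d)
  refine ⟨j, m, rfl, hub, ?_⟩
  set k := m / 2 with hk
  have hmk : m = 2 * k := by omega
  have hJ : IsDyadic (Set.Ico (k * 2 ^ (j + 1)) ((k + 1) * 2 ^ (j + 1))) :=
    ⟨k, j + 1, rfl⟩
  have hlow : k * 2 ^ (j + 1) = m * 2 ^ j := by rw [hmk, pow_succ]; ring
  have hhigh : (k + 1) * 2 ^ (j + 1) = (m + 2) * 2 ^ j := by rw [hmk, pow_succ]; ring
  have hss : Set.Ico (m * 2 ^ j) ((m + 1) * 2 ^ j) ⊂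
      Set.Ico (k * 2 ^ (j + 1)) ((k + 1) * 2 ^ (j + 1)) := by
    rw [hlow, hhigh]
    constructor
    · intro x hx
      simp only [Set.mem_Ico] at *
      constructor
      · exact hx.1
      · nlinarith [hx.2]
    · intro hcon
      have hmem : (m + 1) * 2 ^ j ∈ Set.Ico (m * 2 ^ j) ((m + 2) * 2 ^ j) := by
        constructor <;> nlinarith
      have := hcon hmem
      simp only [Set.mem_Ico] at this
      omega
  have hnot := hmax _ hJ hss
  rw [Set.not_subset] at hnot
  obtain ⟨x, hxJ, hxd⟩ := hnot
  simp only [Set.mem_Ico, hlow, hhigh] at hxJ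
  simp only [Set.mem_Ico] at hxd
  omega

/-- Lemma `number_enclosing_trees_more_than` (upper-bound form): the number of
maximal dyadic intervals of `[0, d)` is at most `⌊log₂ d⌋ + 1`. -/
theorem stmt_17 (d : ℕ) (hd : 1 ≤ d) :
    Nat.card {I : Set ℕ // IsMaxDyadic 0 d I} ≤ Nat.log 2 d + 1 := by
  classical
  have hbound : ∀ I : {I : Set ℕ // IsMaxDyadic 0 d I},
      (max_spec d I.1 I.2).choose ≤ Nat.log 2 d := by
    intro I
    obtain ⟨m, -, hub, -⟩ := (max_spec d I.1 I.2).choose_spec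
    have hp : 0 < 2 ^ (max_spec d I.1 I.2).choose := Nat.pow_pos (by norm_num)
    have h2 : 2 ^ (max_spec d I.1 I.2).choose ≤ d := le_trans (by nlinarith) hub
    exact (Nat.le_log_iff_pow_le one_lt_two (by omega)).mpr h2
  set f : {I : Set ℕ // IsMaxDyadic 0 d I} → Fin (Nat.log 2 d + 1) := fun I =>
    ⟨(max_spec d I.1 I.2).choose, Nat.lt_succ_of_le (hbound I)⟩ with hf
  have hinj : Function.Injective f := by
    intro I₁ I₂ hIJ
    have hj : (max_spec d I₁.1 I₁.2).choose = (max_spec d I₂.1 I₂.2).choose := by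
      simpa [hf] using congrArg Fin.val hIJ
    obtain ⟨m₁, he₁, hub₁, hlb₁⟩ := (max_spec d I₁.1 I₁.2).choose_spec
    obtain ⟨m₂, he₂, hub₂, hlb₂⟩ := (max_spec d I₂.1 I₂.2).choose_spec
    set j := (max_spec d I₁.1 I₁.2).choose with hjdef
    rw [← hj] at he₂ hub₂ hlb₂
    have hp : 0 < 2 ^ j := Nat.pow_pos (by norm_num)
    have hm : m₁ = m₂ := by
      have h1 : (m₁ + 1) * 2 ^ j < (m₂ + 2) * 2 ^ j := lt_of_le_of_lt hub₁ hlb₂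
      have h2 : (m₂ + 1) * 2 ^ j < (m₁ + 2) * 2 ^ j := lt_of_le_of_lt hub₂ hlb₁
      have h1' : m₁ + 1 < m₂ + 2 := by
        by_contra hc
        push_neg at hc
        exact absurd h1 (not_lt.mpr (Nat.mul_le_mul_right _ hc))
      have h2' : m₂ + 1 < m₁ + 2 := by
        by_contra hc
        push_neg at hc
        exact absurd h2 (not_lt.mpr (Nat.mul_le_mul_right _ hc))
      omega
    apply Subtype.ext
    rw [he₁, he₂, hm]
  calc Nat.card {I : Set ℕ // IsMaxDyadic 0 d I}
      ≤ Nat.card (Fin (Nat.log 2 d + 1)) := Nat.card_le_card_of_injective f hinj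
    _ = Nat.log 2 d + 1 := by simp
end

section
/- For all natural numbers a and m with 1 ≤ a < 2^m, the number of maximal dyadic intervals contained in [a, 2^m) is at most m. -/
lemma max_dyadic_bounds (a m p j : ℕ) (ha : 1 ≤ a)
    (h : IsMaxDyadic a (2 ^ m) (Set.Ico (p * 2 ^ j) ((p + 1) * 2 ^ j))) :
    j < m ∧ a ≤ p * 2 ^ j ∧ p * 2 ^ j < a + 2 ^ j := by
  obtain ⟨-, hsub, hmax⟩ := h
  have h2j : 0 < 2 ^ j := Nat.pow_pos (by norm_num)
  have hne : p * 2 ^ j < (p + 1) * 2 ^ j := by nlinarith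
  rw [Set.Ico_subset_Ico_iff hne] at hsub
  obtain ⟨hlo, hhi⟩ := hsub
  have hp1 : 1 ≤ p := by
    rcases Nat.eq_zero_or_pos p with h0 | h1
    · subst h0; simp at hlo; omega
    · exact h1
  have hjm : j < m := by
    have h2 : 2 * 2 ^ j ≤ 2 ^ m := le_trans (by nlinarith) hhi
    have : 2 ^ (j + 1) ≤ 2 ^ m := by rw [pow_succ]; linarith
    have := (Nat.pow_le_pow_iff_right (by norm_num : 1 < 2)).mp this
    omega
  refine ⟨hjm, hlo, ?_⟩
  rcases Nat.even_or_odd p with ⟨q, hq⟩ | ⟨q, hq⟩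
  · -- p even: the parent interval is still inside [a, 2^m), contradicting maximality
    exfalso
    have hq2 : p = 2 * q := by omega
    subst hq2
    have hJd : IsDyadic (Set.Ico (q * 2 ^ (j + 1)) ((q + 1) * 2 ^ (j + 1))) := ⟨q, j + 1, rfl⟩
    have heq1 : q * 2 ^ (j + 1) = 2 * q * 2 ^ j := by ring
    have heq2 : (q + 1) * 2 ^ (j + 1) = (2 * q + 2) * 2 ^ j := by ring
    have hss : Set.Ico (2 * q * 2 ^ j) ((2 * q + 1) * 2 ^ j) ⊂
        Set.Ico (q * 2 ^ (j + 1)) ((q + 1) * 2 ^ (j + 1)) := by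
      rw [heq1, heq2]
      constructor
      · exact Set.Ico_subset_Ico (le_refl _) (by nlinarith)
      · intro hcon
        have : (2 * q + 1) * 2 ^ j ∈ Set.Ico (2 * q * 2 ^ j) ((2 * q + 1) * 2 ^ j) :=
          hcon ⟨by nlinarith, by nlinarith⟩
        exact absurd this.2 (lt_irrefl _)
    apply hmax _ hJd hss
    rw [heq1, heq2, Set.Ico_subset_Ico_iff (by nlinarith)]
    refine ⟨hlo, ?_⟩
    -- (2q+2)·2^j ≤ 2^m, using that (2q+1)·2^j ≤ 2^m and 2^(m-j) is even
    obtain ⟨k, hk⟩ : ∃ k, m = j + 1 + k := ⟨m - j - 1, by omega⟩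
    subst hk
    have hpow : 2 ^ (j + 1 + k) = (2 * 2 ^ k) * 2 ^ j := by ring
    rw [hpow] at hhi ⊢
    have h1 : 2 * q + 1 ≤ 2 * 2 ^ k := Nat.le_of_mul_le_mul_right hhi h2j
    have h2 : 2 * q + 2 ≤ 2 * 2 ^ k := by omega
    exact Nat.mul_le_mul_right _ h2
  · -- p odd: the parent interval sticks out on the left, so (p-1)·2^j < a
    have hq2 : p = 2 * q + 1 := hq
    subst hq2
    have hJd : IsDyadic (Set.Ico (q * 2 ^ (j + 1)) ((q + 1) * 2 ^ (j + 1))) := ⟨q, j + 1, rfl⟩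
    have heq1 : q * 2 ^ (j + 1) = 2 * q * 2 ^ j := by ring
    have heq2 : (q + 1) * 2 ^ (j + 1) = (2 * q + 1 + 1) * 2 ^ j := by ring
    have hss : Set.Ico ((2 * q + 1) * 2 ^ j) ((2 * q + 1 + 1) * 2 ^ j) ⊂
        Set.Ico (q * 2 ^ (j + 1)) ((q + 1) * 2 ^ (j + 1)) := by
      rw [heq1, heq2]
      constructor
      · exact Set.Ico_subset_Ico (by nlinarith) (le_refl _)
      · intro hcon
        have : 2 * q * 2 ^ j ∈ Set.Ico ((2 * q + 1) * 2 ^ j) ((2 * q + 1 + 1) * 2 ^ j) :=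
          hcon ⟨le_refl _, by nlinarith⟩
        have := this.1
        nlinarith
    have hnot := hmax _ hJd hss
    rw [heq1, heq2, Set.Ico_subset_Ico_iff (by nlinarith)] at hnot
    push_neg at hnot
    have hleft : 2 * q * 2 ^ j < a := by
      by_contra hc
      push_neg at hc
      exact absurd hhi (not_le_of_gt (hnot hc))
    nlinarith

/-- Lemma `number_enclosing_trees_less_than`: for `1 ≤ a < 2^m`, the number of
maximal dyadic intervals of `[a, 2^m)` is at most `m`. -/
theorem stmt_18 (a m : ℕ) (ha : 1 ≤ a) (ham : a < 2 ^ m) :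
    Nat.card {I : Set ℕ // IsMaxDyadic a (2 ^ m) I} ≤ m := by
  have key : ∀ I : {I : Set ℕ // IsMaxDyadic a (2 ^ m) I},
      ∃ j, j < m ∧ ∃ p, (I : Set ℕ) = Set.Ico (p * 2 ^ j) ((p + 1) * 2 ^ j) ∧
        a ≤ p * 2 ^ j ∧ p * 2 ^ j < a + 2 ^ j := by
    rintro ⟨I, hI⟩
    obtain ⟨p, j, hrep⟩ := hI.1
    have hI' := hI
    rw [hrep] at hI'
    obtain ⟨hjm, hle, hlt⟩ := max_dyadic_bounds a m p j ha hI'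
    exact ⟨j, hjm, p, hrep, hle, hlt⟩
  choose J hJm P hrep hle hlt using key
  have hinj : Function.Injective (fun I : {I : Set ℕ // IsMaxDyadic a (2 ^ m) I} =>
      (⟨J I, hJm I⟩ : Fin m)) := by
    intro I1 I2 hJeq
    simp only [Fin.mk.injEq] at hJeq
    have h2j : 0 < 2 ^ J I1 := Nat.pow_pos (by norm_num)
    have hPeq : P I1 = P I2 := by
      have h1 := hle I1; have h2 := hlt I1
      have h3 := hle I2; have h4 := hlt I2
      rw [← hJeq] at h3 h4
      have l1 : P I1 * 2 ^ J I1 < (P I2 + 1) * 2 ^ J I1 := by nlinarith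
      have l2 : P I2 * 2 ^ J I1 < (P I1 + 1) * 2 ^ J I1 := by nlinarith
      have := Nat.lt_of_mul_lt_mul_right l1
      have := Nat.lt_of_mul_lt_mul_right l2
      omega
    apply Subtype.ext
    rw [hrep I1, hrep I2, hPeq, hJeq]
  calc Nat.card {I : Set ℕ // IsMaxDyadic a (2 ^ m) I}
      ≤ Nat.card (Fin m) := Nat.card_le_card_of_injective _ hinj
    _ = m := by simp
end

section
/- For all natural numbers a and d with d ≥ 1 and a ≥ d, the number of maximal dyadic intervals contained in the integer interval (a − d, a + d), i.e. in Ico (a − d + 1) (a + d), is at most 4·(⌊log₂ d⌋ + 1), where ⌊log₂ d⌋ = Nat.log 2 d; in particular, this number is O(log d). -/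
/-- Main combinatorial bound for integer DA-PSI: the number of maximal dyadic
intervals of `(a − d, a + d)`, i.e. of `Ico (a − d + 1) (a + d)`, is at most
`4 (⌊log₂ d⌋ + 1) = O(log d)`. -/
theorem stmt_19 (a d : ℕ) (hd : 1 ≤ d) (had : d ≤ a) :
    Nat.card {I : Set ℕ // IsMaxDyadic (a - d + 1) (a + d) I}
      ≤ 4 * (Nat.log 2 d + 1) := by
  set lo := a - d + 1 with hlo
  set hi := a + d with hhi
  set L := Nat.log 2 d + 1 with hL
  choose m j hmj using fun I : {I : Set ℕ // IsMaxDyadic lo hi I} => I.2.1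
  have hpos : ∀ I : {I : Set ℕ // IsMaxDyadic lo hi I}, (0:ℕ) < 2 ^ j I :=
    fun I => Nat.pow_pos (by norm_num)
  have hlt : ∀ I : {I : Set ℕ // IsMaxDyadic lo hi I},
      m I * 2 ^ j I < (m I + 1) * 2 ^ j I :=
    fun I => (Nat.mul_lt_mul_right (hpos I)).mpr (Nat.lt_succ_self _)
  have hsub : ∀ I : {I : Set ℕ // IsMaxDyadic lo hi I},
      lo ≤ m I * 2 ^ j I ∧ (m I + 1) * 2 ^ j I ≤ hi := by
    intro I
    have h := I.2.2.1
    rw [hmj I] at h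
    exact (Set.Ico_subset_Ico_iff (hlt I)).mp h
  -- the parent interval is not contained in [lo, hi)
  have hpar : ∀ I : {I : Set ℕ // IsMaxDyadic lo hi I},
      (m I / 2) * 2 ^ (j I + 1) < lo ∨ hi < (m I / 2 + 1) * 2 ^ (j I + 1) := by
    intro I
    have hP : IsDyadic (Set.Ico ((m I / 2) * 2 ^ (j I + 1)) ((m I / 2 + 1) * 2 ^ (j I + 1))) :=
      ⟨_, _, rfl⟩
    have hps : 2 ^ (j I + 1) = 2 ^ j I * 2 := pow_succ 2 (j I)
    have hsub1 : (m I / 2) * 2 ^ (j I + 1) ≤ m I * 2 ^ j I := by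
      rw [hps]
      calc (m I / 2) * (2 ^ j I * 2) = (m I / 2 * 2) * 2 ^ j I := by ring
        _ ≤ m I * 2 ^ j I := Nat.mul_le_mul_right _ (Nat.div_mul_le_self _ _)
    have hsub2 : (m I + 1) * 2 ^ j I ≤ (m I / 2 + 1) * 2 ^ (j I + 1) := by
      rw [hps]
      have h1 : m I + 1 ≤ (m I / 2 + 1) * 2 := by omega
      calc (m I + 1) * 2 ^ j I ≤ ((m I / 2 + 1) * 2) * 2 ^ j I :=
            Nat.mul_le_mul_right _ h1
        _ = (m I / 2 + 1) * (2 ^ j I * 2) := by ring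
    have hssub : I.1 ⊂ Set.Ico ((m I / 2) * 2 ^ (j I + 1)) ((m I / 2 + 1) * 2 ^ (j I + 1)) := by
      rw [hmj I]
      refine (Set.Ico_subset_Ico hsub1 hsub2).ssubset_of_ne ?_
      intro hEq
      have hne : m I * 2 ^ j I < (m I + 1) * 2 ^ j I := hlt I
      have := (Set.Ico_eq_Ico_iff (Or.inl hne)).mp hEq
      have hps' := hps
      have hppos := hpos I
      nlinarith [this.1, this.2]
    have hnot := I.2.2.2 _ hP hssub
    by_contra hc
    push_neg at hc
    exact hnot (Set.Ico_subset_Ico hc.1 hc.2)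
  -- levels are bounded
  have hjL : ∀ I : {I : Set ℕ // IsMaxDyadic lo hi I}, j I ≤ L := by
    intro I
    have h1 := (hsub I).1
    have h2 := (hsub I).2
    have hp : m I * 2 ^ j I + 2 ^ j I = (m I + 1) * 2 ^ j I := by ring
    have h2j : 2 ^ j I < 2 * d := by omega
    have hdL : d < 2 ^ L := Nat.lt_pow_succ_log_self (by norm_num) d
    have : 2 ^ j I < 2 ^ (L + 1) := by
      have : 2 ^ (L + 1) = 2 * 2 ^ L := by rw [pow_succ]; ring
      omega
    have := (Nat.pow_lt_pow_iff_right (by norm_num : 1 < 2)).mp this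
    omega
  -- build the injection
  set F : {I : Set ℕ // IsMaxDyadic lo hi I} → Fin (L + 1) × Bool :=
    fun I => (⟨j I, Nat.lt_succ_of_le (hjL I)⟩,
      decide ((m I / 2) * 2 ^ (j I + 1) < lo)) with hF
  have hinj : Function.Injective F := by
    intro I₁ I₂ hEq
    have hj : j I₁ = j I₂ := by
      have := congrArg (fun x => (Prod.fst x : Fin (L+1)).val) hEq
      simpa [hF] using this
    have hb : decide ((m I₁ / 2) * 2 ^ (j I₁ + 1) < lo)
        = decide ((m I₂ / 2) * 2 ^ (j I₂ + 1) < lo) := by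
      have := congrArg Prod.snd hEq
      simpa [hF] using this
    have hmm : m I₁ = m I₂ := by
      have hj' : j I₂ = j I₁ := hj.symm
      have s1 := hsub I₁
      have s2 := hsub I₂
      rw [hj'] at s2
      have par2 := hpar I₂
      rw [hj'] at par2
      rw [hj'] at hb
      set q := j I₁
      set p := 2 ^ q with hpdef
      have hppos : 0 < p := hpos I₁
      have hps : 2 ^ (q + 1) = p * 2 := pow_succ 2 q
      have key1 : ∀ (k : ℕ), k / 2 * 2 ^ (q + 1) < lo → k * p < lo + p := by
        intro k hk2
        rw [hps] at hk2
        have h1 : k * p ≤ (k / 2) * (p * 2) + p := by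
          have hk : k ≤ k / 2 * 2 + 1 := by omega
          calc k * p ≤ (k / 2 * 2 + 1) * p := Nat.mul_le_mul_right _ hk
            _ = (k / 2) * (p * 2) + p := by ring
        omega
      have key2 : ∀ (k : ℕ), hi < (k / 2 + 1) * 2 ^ (q + 1) → hi < (k + 1) * p + p := by
        intro k hk2
        rw [hps] at hk2
        have h1 : (k / 2 + 1) * (p * 2) ≤ (k + 1) * p + p := by
          have hk : (k / 2 + 1) * 2 ≤ k + 2 := by omega
          calc (k / 2 + 1) * (p * 2) = ((k / 2 + 1) * 2) * p := by ring
            _ ≤ (k + 2) * p := Nat.mul_le_mul_right _ hk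
            _ = (k + 1) * p + p := by ring
        omega
      have mono : ∀ k l : ℕ, k * p < (l + 1) * p → k ≤ l := by
        intro k l hkl
        have : k < l + 1 := (Nat.mul_lt_mul_right hppos).mp hkl
        omega
      by_cases hc1 : m I₁ / 2 * 2 ^ (q + 1) < lo
      · have hc2 : m I₂ / 2 * 2 ^ (q + 1) < lo := by
          rw [decide_eq_decide] at hb; exact hb.mp hc1
        have k1 := key1 (m I₁) hc1
        have k2 := key1 (m I₂) hc2
        have l1 := s1.1
        have l2 := s2.1
        have e1 : m I₁ ≤ m I₂ := mono _ _ (by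
          have : (m I₂ + 1) * p = m I₂ * p + p := by ring
          omega)
        have e2 : m I₂ ≤ m I₁ := mono _ _ (by
          have : (m I₁ + 1) * p = m I₁ * p + p := by ring
          omega)
        omega
      · have hc2 : ¬ m I₂ / 2 * 2 ^ (q + 1) < lo := by
          rw [decide_eq_decide] at hb
          exact fun h => hc1 (hb.mpr h)
        have hh1 : hi < (m I₁ / 2 + 1) * 2 ^ (q + 1) := (hpar I₁).resolve_left hc1
        have hh2 : hi < (m I₂ / 2 + 1) * 2 ^ (q + 1) := par2.resolve_left hc2
        have k1 := key2 (m I₁) hh1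
        have k2 := key2 (m I₂) hh2
        have l1 := s1.2
        have l2 := s2.2
        have e1 : m I₁ + 1 ≤ m I₂ + 1 := mono _ _ (by
          have : (m I₂ + 1 + 1) * p = (m I₂ + 1) * p + p := by ring
          omega)
        have e2 : m I₂ + 1 ≤ m I₁ + 1 := mono _ _ (by
          have : (m I₁ + 1 + 1) * p = (m I₁ + 1) * p + p := by ring
          omega)
        omega
    apply Subtype.ext
    rw [hmj I₁, hmj I₂, hmm, hj]
  have hcard : Nat.card {I : Set ℕ // IsMaxDyadic lo hi I}
      ≤ Nat.card (Fin (L + 1) × Bool) :=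
    Nat.card_le_card_of_injective F hinj
  have : Nat.card (Fin (L + 1) × Bool) = (L + 1) * 2 := by
    simp [Nat.card_eq_fintype_card]
  omega
end
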